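/- arXiv:1705.07802 — 2 statements merged into one kernel-verified Lean document; each statement's English description precedes it below -/
import Mathlib

section
/- Let Q be a quasi-order and ξ a countable ordinal. For every term T ∈ ⊔Tree^ξ(Q), every function in the class Σ_T is Δ⁰_{1+ξ}-measurable. -/
/-!
Common definitions for formalizing "On the structure of the Wadge degrees of bqo-valued
Borel functions" by Kihara and Montalbán.
-/

open scoped Classical
noncomputable section

namespace WadgeStudy

/-! ### Baire space `ω^ω` -/

/-- Baire space `ω^ω`: the product of countably many copies of discrete `ω`. -/
abbrev Baire : Type := ℕ → ℕ

/-- The basic clopen set `[σ]` of all infinite sequences extending the finite string `σ`. -/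
def cylB (σ : List ℕ) : Set Baire := {X | ∀ i : Fin σ.length, X i = σ.get i}

/-- The finite initial segment `X↾n` of `X ∈ ω^ω`. -/
def initSeg (X : Baire) (n : ℕ) : List ℕ := List.ofFn fun i : Fin n => X i

/-- Concatenation `σ⌢X` of a finite string and an infinite sequence. -/
def appendStr (σ : List ℕ) (X : Baire) : Baire := fun i =>
  if h : i < σ.length then σ.get ⟨i, h⟩ else X (i - σ.length)

/-! ### The Borel hierarchy -/

/-- The Borel hierarchy: `Σ⁰₁` sets are the open sets; for `α > 1`, a set is `Σ⁰_α` if it is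
a countable union of sets each of which is `Π⁰_β` (i.e. has `Σ⁰_β` complement) for some
`β < α`. -/
inductive SigmaZero (X : Type*) [TopologicalSpace X] : Ordinal.{0} → Set X → Prop
  | of_isOpen {s : Set X} : IsOpen s → SigmaZero X 1 s
  | iUnion {α : Ordinal} (hα : 1 < α) (f : ℕ → Set X) (β : ℕ → Ordinal)
      (hβ : ∀ n, β n < α) (hf : ∀ n, SigmaZero X (β n) (f n)ᶜ) :
      SigmaZero X α (⋃ n, f n)

/-- `Π⁰_α` sets are the complements of `Σ⁰_α` sets. -/
def PiZero (X : Type*) [TopologicalSpace X] (α : Ordinal.{0}) (s : Set X) : Prop :=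
  SigmaZero X α sᶜ

/-- `Δ⁰_α = Σ⁰_α ∩ Π⁰_α`. -/
def DeltaZero (X : Type*) [TopologicalSpace X] (α : Ordinal.{0}) (s : Set X) : Prop :=
  SigmaZero X α s ∧ PiZero X α s

/-- A countable ordinal. -/
def IsCountableOrd (ξ : Ordinal.{0}) : Prop := ξ.card ≤ Cardinal.aleph0

/-- `A : X → Q` (with `Q` carrying the discrete topology) is `Δ⁰_ξ`-measurable iff its range is
countable and every fiber is `Δ⁰_ξ`. -/
def DeltaMeasurable {X : Type*} [TopologicalSpace X] {Q : Type*} (ξ : Ordinal.{0}) (A : X → Q) :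
    Prop :=
  (Set.range A).Countable ∧ ∀ q : Q, DeltaZero X ξ (A ⁻¹' {q})

/-- A function into Baire space is `Σ⁰_ξ`-measurable if the preimage of every basic clopen set
is `Σ⁰_ξ`. -/
def SigmaMeasurable {X : Type*} [TopologicalSpace X] (ξ : Ordinal.{0}) (D : X → Baire) : Prop :=
  ∀ σ : List ℕ, SigmaZero X ξ (D ⁻¹' cylB σ)

/-- A `Q`-valued function is Borel if it is `Δ⁰_ξ`-measurable for some countable ordinal `ξ`. -/
def BorelMeasurable {X : Type*} [TopologicalSpace X] {Q : Type*} (A : X → Q) : Prop :=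
  ∃ ξ : Ordinal.{0}, IsCountableOrd ξ ∧ DeltaMeasurable ξ A

/-! ### Wadge reducibility of `Q`-valued functions -/

/-- `Q`-Wadge reducibility: `A ≤_w B` iff there is a continuous `θ` from the domain of `A` to
the domain of `B` with `A X ≤_Q B (θ X)` for all `X`. -/
def WadgeLE {X Y : Type*} [TopologicalSpace X] [TopologicalSpace Y] {Q : Type*} [Preorder Q]
    (A : X → Q) (B : Y → Q) : Prop :=
  ∃ θ : X → Y, Continuous θ ∧ ∀ x, A x ≤ B (θ x)

/-- `Q`-Wadge equivalence. -/
def WadgeEquiv {X Y : Type*} [TopologicalSpace X] [TopologicalSpace Y] {Q : Type*} [Preorder Q]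
    (A : X → Q) (B : Y → Q) : Prop :=
  WadgeLE A B ∧ WadgeLE B A

/-- `A` is self-dual if there is a continuous `θ` with `A (θ X) ≰_Q A X` for all `X`. -/
def SelfDual {Q : Type*} [Preorder Q] (A : Baire → Q) : Prop :=
  ∃ θ : Baire → Baire, Continuous θ ∧ ∀ X, ¬ A (θ X) ≤ A X

/-- The function `A↾[σ] : X ↦ A (σ⌢X)`. -/
def restrictCyl {Q : Type*} (A : Baire → Q) (σ : List ℕ) : Baire → Q :=
  fun X => A (appendStr σ X)

/-- `A` is initializable if `A ≤_w A↾[σ]` for every finite string `σ`. -/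
def Initializable {Q : Type*} [Preorder Q] (A : Baire → Q) : Prop :=
  ∀ σ : List ℕ, WadgeLE A (restrictCyl A σ)

/-- `F(A) = {X : ∀ n, A↾[X↾n] ≡_w A}`. -/
def FSet {Q : Type*} [Preorder Q] (A : Baire → Q) : Set Baire :=
  {X | ∀ n : ℕ, WadgeEquiv (restrictCyl A (initSeg X n)) A}

/-- The countable join `⊕_n A_n`, defined by `(⊕_n A_n)(n⌢X) = A_n X`. -/
def oplus {Q : Type*} (A : ℕ → Baire → Q) : Baire → Q :=
  fun X => A (X 0) fun n => X (n + 1)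

/-- A Borel function `A` is σ-join-reducible if its `Q`-Wadge degree is the least upper bound
of a countable collection of `Q`-Wadge degrees (of Borel functions) each strictly below it. -/
def SigmaJoinReducible {Q : Type*} [Preorder Q] (A : Baire → Q) : Prop :=
  ∃ B : ℕ → Baire → Q,
    (∀ n, BorelMeasurable (B n)) ∧
    (∀ n, WadgeLE (B n) A ∧ ¬ WadgeLE A (B n)) ∧
    ∀ C : Baire → Q, BorelMeasurable C → (∀ n, WadgeLE (B n) C) → WadgeLE A C

/-! ### Better quasi-orders -/

/-- Removing the first entry of a strictly increasing sequence. -/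
def dropMin (X : {X : Baire // StrictMono X}) : {X : Baire // StrictMono X} :=
  ⟨fun n => X.1 (n + 1), fun _ _ h => X.2 (Nat.add_lt_add_right h 1)⟩

/-- A quasi-order `Q` is a better-quasi-order if for every continuous `f : [ω]^ω → Q` (where
`Q` is discrete and `[ω]^ω ⊆ ω^ω` is the subspace of strictly increasing sequences) there is
`X` with `f X ≤_Q f X⁻`. -/
def IsBQO (Q : Type*) [Preorder Q] : Prop :=
  ∀ f : {X : Baire // StrictMono X} → Q,
    @Continuous _ _ _ ⊥ f → ∃ X, f X ≤ f (dropMin X)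

/-! ### Terms: nested labeled trees and forests -/

/-- `L(Q)`-terms: constants `q ∈ Q`, labelings `⟨T⟩^{ω^α}` (with `⟨T⟩ = ⟨T⟩^{ω^0}`),
trees `B → ⊔_i F_i`, and countable disjoint unions `⊔_i F_i`. -/
inductive Term (Q : Type u) : Type (max u 1)
  | const : Q → Term Q
  | jump : Ordinal.{0} → Term Q → Term Q
  | node : Term Q → (ℕ → Term Q) → Term Q
  | sup : (ℕ → Term Q) → Term Q

/-- `⟨⟩`-type (base) terms: constants and labelings. -/
def IsBase {Q : Type u} : Term Q → Prop
  | Term.const _ => True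
  | Term.jump _ _ => True
  | _ => False

/-- A rank function on terms, used to define the quasi-order `⊴` by recursion. -/
def rk {Q : Type u} : Term Q → Ordinal.{0}
  | .const _ => 0
  | .jump _ T => rk T + 1
  | .node B F => max (rk B) (Ordinal.lsub fun i => rk (F i)) + 1
  | .sup F => Ordinal.lsub (fun i => rk (F i)) + 1

theorem ord_lt_add_one (a : Ordinal.{0}) : a < a + 1 := by
  rw [Ordinal.add_one_eq_succ]; exact Order.lt_succ a

theorem rk_lt_jump {Q : Type u} (α : Ordinal.{0}) (T : Term Q) : rk T < rk (.jump α T) :=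
  ord_lt_add_one (rk T)

theorem rk_base_lt_node {Q : Type u} (B : Term Q) (F : ℕ → Term Q) :
    rk B < rk (.node B F) :=
  lt_of_le_of_lt (le_max_left _ _) (ord_lt_add_one _)

theorem rk_child_lt_node {Q : Type u} (B : Term Q) (F : ℕ → Term Q) (i : ℕ) :
    rk (F i) < rk (.node B F) :=
  lt_of_lt_of_le (Ordinal.lt_lsub _ i) (le_trans (le_max_right _ _) (le_of_lt (ord_lt_add_one _)))

theorem rk_child_lt_sup {Q : Type u} (F : ℕ → Term Q) (i : ℕ) :
    rk (F i) < rk (.sup F) :=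
  lt_of_lt_of_le (Ordinal.lt_lsub _ i) (le_of_lt (ord_lt_add_one _))

/-- The quasi-order `⊴` on terms, defined by simultaneous recursion.  A constant `q` is
identified with `⟨q⟩` (so a constant compares with a labeled term by unravelling the label)
and a `⟨⟩`-type term `B` is identified with `B → (empty forest)`, the empty forest being
`⊴`-below everything.  The clauses are:
* `p ⊴ q` iff `p ≤_Q q`;
* `⟨U⟩^{ω^α} ⊴ ⟨V⟩^{ω^β}` iff `U ⊴ V` when `α = β`, iff `⟨U⟩^{ω^α} ⊴ V` when `α > β`, and
  iff `U ⊴ ⟨V⟩^{ω^β}` when `α < β`;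
* for `S = B→⊔_i S_i` and `T = C→⊔_j T_j`: `S ⊴ T` iff either (`B ⊴ C` and `S_i ⊴ T` for
  all `i`), or (`B ⋬ C` and `S ⊴ T_j` for some `j`);
* `⊔` is interpreted as countable supremum: `⊔_i S_i ⊴ ⊔_j T_j` iff every `S_i` is `⊴` some
  `T_j`. -/
def TermLE {Q : Type u} [Preorder Q] : Term Q → Term Q → Prop
  | .const p, .const q => p ≤ q
  | .const p, .jump _ V => TermLE (.const p) V
  | .const p, .node C G =>
      (TermLE (.const p) C) ∨ (¬ TermLE (.const p) C ∧ ∃ j, TermLE (.const p) (G j))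
  | .const p, .sup G => ∃ j, TermLE (.const p) (G j)
  | .jump _ U, .const q => TermLE U (.const q)
  | .jump α U, .jump β V =>
      if α = β then TermLE U V
      else if β < α then TermLE (.jump α U) V
      else TermLE U (.jump β V)
  | .jump α U, .node C G =>
      (TermLE (.jump α U) C) ∨ (¬ TermLE (.jump α U) C ∧ ∃ j, TermLE (.jump α U) (G j))
  | .jump α U, .sup G => ∃ j, TermLE (.jump α U) (G j)
  | .node B F, .const q => TermLE B (.const q) ∧ ∀ i, TermLE (F i) (.const q)
  | .node B F, .jump β V => TermLE B (.jump β V) ∧ ∀ i, TermLE (F i) (.jump β V)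
  | .node B F, .node C G =>
      (TermLE B C ∧ ∀ i, TermLE (F i) (.node C G)) ∨
      (¬ TermLE B C ∧ ∃ j, TermLE (.node B F) (G j))
  | .node B F, .sup G => ∃ j, TermLE (.node B F) (G j)
  | .sup F, .const q => ∀ i, TermLE (F i) (.const q)
  | .sup F, .jump β V => ∀ i, TermLE (F i) (.jump β V)
  | .sup F, .node C G => ∀ i, TermLE (F i) (.node C G)
  | .sup F, .sup G => ∀ i, ∃ j, TermLE (F i) (G j)
termination_by S T => (rk S, rk T)
decreasing_by
  all_goals
    first
      | exact Prod.Lex.left _ _ (rk_lt_jump _ _)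
      | exact Prod.Lex.left _ _ (rk_base_lt_node _ _)
      | exact Prod.Lex.left _ _ (rk_child_lt_node _ _ _)
      | exact Prod.Lex.left _ _ (rk_child_lt_sup _ _)
      | exact Prod.Lex.right _ (rk_lt_jump _ _)
      | exact Prod.Lex.right _ (rk_base_lt_node _ _)
      | exact Prod.Lex.right _ (rk_child_lt_node _ _ _)
      | exact Prod.Lex.right _ (rk_child_lt_sup _ _)

/-- `S ≡ T`: `S ⊴ T` and `T ⊴ S`. -/
def TermEquiv {Q : Type u} [Preorder Q] (S T : Term Q) : Prop := TermLE S T ∧ TermLE T S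

/-- `Tree^n(Q)` for finite `n`: `Tree⁰(Q) = Q` and `Tree^{n+1}(Q) = Tree(Tree^n(Q))`, where
`Tree(Q')` consists of the one point trees `⟨q'⟩` and the trees `⟨q'⟩ → ⊔_i T_i` for
`q' ∈ Q'` and trees `T_i ∈ Tree(Q')`. -/
inductive IsTreeN {Q : Type u} : ℕ → Term Q → Prop
  | const (q : Q) : IsTreeN 0 (.const q)
  | leaf {n : ℕ} {T : Term Q} : IsTreeN n T → IsTreeN (n + 1) (.jump 0 T)
  | node {n : ℕ} {T : Term Q} {F : ℕ → Term Q} :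
      IsTreeN n T → (∀ i, IsTreeN (n + 1) (F i)) → IsTreeN (n + 1) (.node (.jump 0 T) F)

/-- `⊔Tree^n(Q)`: trees in `Tree^n(Q)` and countable disjoint unions of such trees. -/
def IsForestN {Q : Type u} (n : ℕ) (T : Term Q) : Prop :=
  IsTreeN n T ∨ ∃ F : ℕ → Term Q, T = .sup F ∧ ∀ i, IsTreeN n (F i)

/-- The exponent `α` in the normal form `ξ = ω^α + β`, `β < ω^{α+1}`. -/
def olog (ξ : Ordinal.{0}) : Ordinal.{0} := Ordinal.log Ordinal.omega0 ξ

/-- The remainder `β` in the normal form `ξ = ω^α + β`, `β < ω^{α+1}`. -/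
def obeta (ξ : Ordinal.{0}) : Ordinal.{0} := ξ - Ordinal.omega0 ^ olog ξ

/-- `Tree^ξ(Q)` for an ordinal `ξ`: writing `ξ = ω^α + β` with `β < ω^{α+1}`, one has
`Tree^ξ(Q) = Tree^{ω^α}(⟨Tree^β(Q)⟩^{ω^α})` (with `Tree⁰(Q) = Q`), where `Tree^{ω^α}(Q')` is
generated from the constants `q' ∈ Q'` (which are `⟨⟩`-type) by the labelings `⟨T⟩^{ω^γ}` for
`γ < α` (also `⟨⟩`-type) and by `T → ⊔_i F_i` for `⟨⟩`-type `T` and trees `F_i`. -/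
inductive IsTreeXi {Q : Type u} : Ordinal.{0} → Term Q → Prop
  | const {ξ : Ordinal.{0}} (q : Q) (h : obeta ξ = 0) : IsTreeXi ξ (Term.const q)
  | atom {ξ : Ordinal.{0}} {S : Term Q} (h : obeta ξ ≠ 0) (hS : IsTreeXi (obeta ξ) S) :
      IsTreeXi ξ (Term.jump (olog ξ) S)
  | jump {ξ β : Ordinal.{0}} {T : Term Q} (h0 : ξ ≠ 0) (hβ : β < olog ξ) (hT : IsTreeXi ξ T) :
      IsTreeXi ξ (Term.jump β T)
  | node {ξ : Ordinal.{0}} {B : Term Q} {F : ℕ → Term Q} (h0 : ξ ≠ 0) (hB : IsTreeXi ξ B)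
      (hbase : IsBase B) (hF : ∀ i, IsTreeXi ξ (F i)) : IsTreeXi ξ (Term.node B F)

/-- `⊔Tree^ξ(Q)`: trees in `Tree^ξ(Q)` and countable disjoint unions of such trees. -/
def IsForestXi {Q : Type u} (ξ : Ordinal.{0}) (T : Term Q) : Prop :=
  IsTreeXi ξ T ∨ ∃ F : ℕ → Term Q, T = .sup F ∧ ∀ i, IsTreeXi ξ (F i)

/-- The `k`-fold labeling `⟨⟨…⟨T⟩…⟩⟩`. -/
def labelIter {Q : Type u} : ℕ → Term Q → Term Q
  | 0, T => T
  | k + 1, T => .jump 0 (labelIter k T)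

/-- `ι(T) = T[⟨q⟩^k / q]`: replace every occurrence of a constant `q` in `T` by `⟨q⟩^k`. -/
def iotaSubst {Q : Type u} (k : ℕ) : Term Q → Term Q
  | .const q => labelIter k (.const q)
  | .jump α T => .jump α (iotaSubst k T)
  | .node B F => .node (iotaSubst k B) fun i => iotaSubst k (F i)
  | .sup F => .sup fun i => iotaSubst k (F i)

/-! ### The pointclasses `Σ_T` -/

/-- `Σ⁰_ξ`-measurability of a Baire-space valued map on the subspace `D ⊆ ω^ω`. -/
def SigmaMeasurableOn (ξ : Ordinal.{0}) (D : Set Baire) (f : Baire → Baire) : Prop :=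
  ∀ σ : List ℕ, SigmaZero (↥D) ξ ((fun x : ↥D => f x.1) ⁻¹' cylB σ)

/-- The pointclass `Σ_T` of `Q`-valued functions associated to a term `T`, relativized to a
domain `D ⊆ ω^ω` (a function defined on a nonempty closed or open subset of `ω^ω` is
identified with the corresponding total function; `SigmaT T D A` expresses `A↾D ∈ Σ_T`):
* `Σ_q` consists only of the constant function `q`;
* `A ∈ Σ_{⊔_i S_i}` iff there is a partition of the domain into relatively clopen sets `C_i`
  with `A↾C_i ∈ Σ_{S_i}` for all `i`;
* `A ∈ Σ_{T→S}` (`S = ⊔_i F_i`) iff there is a relatively open set `V` with `A↾(D∖V) ∈ Σ_T`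
  and `A↾(D∩V) ∈ Σ_S`;
* `A ∈ Σ_{⟨T⟩^{ω^α}}` iff `A = B ∘ D'` for some `Σ⁰_{1+ω^α}`-measurable `D' : ω^ω → ω^ω` and
  some `B ∈ Σ_T` (for `α = 0` this is the clause for the jump `Σ_{⟨T⟩}`, with a
  `Σ⁰₂`-measurable `D'`). -/
inductive SigmaT {Q : Type u} : Term Q → Set Baire → (Baire → Q) → Prop
  | const (q : Q) (D : Set Baire) (A : Baire → Q) (h : ∀ x ∈ D, A x = q) :
      SigmaT (Term.const q) D A
  | sup (S : ℕ → Term Q) (D : Set Baire) (A : Baire → Q) (C : ℕ → Set Baire)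
      (hcl : ∀ i, IsClopen ((fun x : ↥D => x.1) ⁻¹' C i))
      (hpart : ∀ x ∈ D, ∃! i, x ∈ C i)
      (h : ∀ i, SigmaT (S i) (D ∩ C i) A) :
      SigmaT (Term.sup S) D A
  | node (B : Term Q) (F : ℕ → Term Q) (D : Set Baire) (A : Baire → Q) (V : Set Baire)
      (hV : IsOpen ((fun x : ↥D => x.1) ⁻¹' V))
      (h1 : SigmaT B (D \ V) A)
      (h2 : SigmaT (Term.sup F) (D ∩ V) A) :
      SigmaT (Term.node B F) D A
  | jump (α : Ordinal.{0}) (T : Term Q) (D : Set Baire) (A : Baire → Q)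
      (D' : Baire → Baire) (B : Baire → Q)
      (hD : SigmaMeasurableOn (1 + Ordinal.omega0 ^ α) D D')
      (hB : SigmaT T Set.univ B)
      (hA : ∀ x ∈ D, A x = B (D' x)) :
      SigmaT (Term.jump α T) D A

/-- A total function is in `Σ_T` if it is so on the whole space. -/
def MemSigmaT {Q : Type u} (T : Term Q) (A : Baire → Q) : Prop := SigmaT T Set.univ A

/-- `Ω` is `Σ_T`-complete: `Ω ∈ Σ_T` and every function in `Σ_T` is Wadge reducible to `Ω`. -/
def SigmaTComplete {Q : Type u} [Preorder Q] (T : Term Q) (Ω : Baire → Q) : Prop :=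
  MemSigmaT T Ω ∧ ∀ A : Baire → Q, MemSigmaT T A → WadgeLE A Ω

/-! ### `ω̂ = ω ∪ {pass}`, conciliatory functions -/

/-- `ω̂ = ω ∪ {pass}`; `none` plays the role of the symbol `pass`. -/
abbrev Hat : Type := Option ℕ

instance : TopologicalSpace Hat := ⊥
instance : DiscreteTopology Hat := ⟨rfl⟩
instance : TopologicalSpace (Option Hat) := ⊥
instance : DiscreteTopology (Option Hat) := ⟨rfl⟩

/-- `ω̂^ω`, with the product topology of the discrete space `ω̂`. -/
abbrev HatBaire : Type := ℕ → Hat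

/-- Basic clopen subsets of `ω̂^ω`. -/
def cylH (σ : List Hat) : Set HatBaire := {X | ∀ i : Fin σ.length, X i = σ.get i}

/-- The index of the `k`-th non-`pass` entry of `X ∈ ω̂^ω`, if it exists. -/
def nthSome (X : HatBaire) : ℕ → Option ℕ
  | 0 => if h : ∃ i, (X i).isSome then some (Nat.find h) else none
  | k + 1 =>
    match nthSome X k with
    | none => none
    | some i => if h : ∃ j, i < j ∧ (X j).isSome then some (Nat.find h) else none

theorem nthSome_isSome (X : HatBaire) : ∀ k i, nthSome X k = some i → (X i).isSome := by
  intro k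
  induction k with
  | zero =>
    intro i h
    simp only [nthSome] at h
    split at h
    · rename_i hex
      cases h
      exact Nat.find_spec hex
    · exact absurd h (by simp)
  | succ k ih =>
    intro i h
    simp only [nthSome] at h
    split at h
    · exact absurd h (by simp)
    · rename_i j hj
      split at h
      · rename_i hex
        cases h
        exact (Nat.find_spec hex).2
      · exact absurd h (by simp)

theorem nthSome_succ_none {X : HatBaire} {k : ℕ} (h : nthSome X k = none) :
    nthSome X (k + 1) = none := by
  simp only [nthSome, h]

/-- `X^p ∈ ω^{≤ω}`: the finite or infinite sequence obtained from `X ∈ ω̂^ω` by deleting all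
occurrences of `pass`. -/
def strip (X : HatBaire) : Stream'.Seq ℕ :=
  ⟨fun k => (nthSome X k).bind fun i => X i, by
    intro n h
    have hn : nthSome X n = none := by
      cases hh : nthSome X n with
      | none => rfl
      | some i =>
        exfalso
        have h1 := nthSome_isSome X n i hh
        replace h : (nthSome X n).bind (fun i => X i) = none := h
        rw [hh, Option.bind_some] at h
        rw [h] at h1
        simp at h1
    show (nthSome X (n + 1)).bind _ = none
    rw [nthSome_succ_none hn, Option.bind_none]⟩

/-- The natural inclusion `ω^ω ⊆ ω^{≤ω}`. -/
def ofBaire (X : Baire) : Stream'.Seq ℕ :=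
  ⟨fun n => some (X n), by intro n h; simp at h⟩

/-- The natural inclusion `ω^{<ω} ⊆ ω^{≤ω}`. -/
def ofList (σ : List ℕ) : Stream'.Seq ℕ := Stream'.Seq.ofList σ

/-- The initial segment (prefix) relation on `ω^{≤ω}`. -/
def SeqPrefix (σ τ : Stream'.Seq ℕ) : Prop :=
  ∀ n a, σ.get? n = some a → τ.get? n = some a

/-- A `Q`-valued function on `ω̂^ω` is conciliatory if its value depends only on the
pass-deleted input: `X^p = Y^p → A(X) = A(Y)`. -/
def ConciliatoryQ {Q : Type*} (A : HatBaire → Q) : Prop :=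
  ∀ X Y, strip X = strip Y → A X = A Y

/-- `Ψ : ω̂^ω → ω̂^ω` is conciliatory if `X^p = Y^p` implies `Ψ(X)^p = Ψ(Y)^p`. -/
def ConciliatoryF (Ψ : HatBaire → HatBaire) : Prop :=
  ∀ X Y, strip X = strip Y → strip (Ψ X) = strip (Ψ Y)

/-- `Ψ ≡_p Φ`: `Ψ(X)^p = Φ(X)^p` for all `X`. -/
def PEquiv (Ψ Φ : HatBaire → HatBaire) : Prop := ∀ X, strip (Ψ X) = strip (Φ X)

/-- `Σ⁰_ξ`-measurability for self-maps of `ω̂^ω`. -/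
def SigmaMeasurableH (ξ : Ordinal.{0}) (Ψ : HatBaire → HatBaire) : Prop :=
  ∀ σ : List Hat, SigmaZero HatBaire ξ (Ψ ⁻¹' cylH σ)

/-- A conciliatory `U` is `Σ⁰_ξ`-universal if it is `Σ⁰_ξ`-measurable and every
`Σ⁰_ξ`-measurable conciliatory `G` satisfies `G ≡_p U ∘ θ` for some continuous `θ`. -/
def SigmaUniversal (ξ : Ordinal.{0}) (U : HatBaire → HatBaire) : Prop :=
  SigmaMeasurableH ξ U ∧
    ∀ G : HatBaire → HatBaire, ConciliatoryF G → SigmaMeasurableH ξ G →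
      ∃ θ : HatBaire → HatBaire, Continuous θ ∧ PEquiv G (U ∘ θ)

/-- `Ψ` is initializable if for every `τ ∈ ω̂^{<ω}` there is a continuous `θ_τ : ω̂^ω → [τ]`
with `Ψ ≡_p Ψ ∘ θ_τ`. -/
def InitializableH (Ψ : HatBaire → HatBaire) : Prop :=
  ∀ τ : List Hat, ∃ θ : HatBaire → HatBaire,
    Continuous θ ∧ (∀ X, θ X ∈ cylH τ) ∧ PEquiv Ψ (Ψ ∘ θ)

/-! ### The mind-change coding -/

/-- `ω̂^{≤ω}`: finite or infinite sequences over `ω̂` (the value `none` of the outer `Option`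
means "beyond the length of the sequence"). -/
abbrev HatSeq : Type := {Y : ℕ → Option Hat // ∀ n, Y n = none → Y (n + 1) = none}

/-- The pass-deleted sequence `Y^p ∈ ω^{≤ω}` of `Y ∈ ω̂^{≤ω}`. -/
def stripHS (Y : HatSeq) : Stream'.Seq ℕ := strip fun n => (Y.1 n).join

/-- The mind-change coding `Y → Z` for `Y ∈ ω̂^{≤ω}` of length `ℓ` and `Z ∈ ω̂^ω`:
`(Y→Z)(n) = 2·Y(n)` if `n < ℓ` and `Y(n) ≠ pass`; `pass` if `n < ℓ` and `Y(n) = pass`;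
`2·Z(0)+1` if `n = ℓ`; and `Z(n−ℓ)` if `n > ℓ`.  When `Y` is infinite or `Z^p` is empty,
`Y→Z` is `Y` with each non-pass entry doubled (padded with passes). -/
def arrowSeq (Y : HatSeq) (Z : HatBaire) : HatBaire := fun n =>
  match Y.1 n with
  | some (some k) => some (2 * k)
  | some none => none
  | none =>
    if ∀ m, Z m = none then none
    else if n = sInf {m | Y.1 m = none} then (Z 0).map fun z => 2 * z + 1
    else Z (n - sInf {m | Y.1 m = none})

/-- The canonical `π₀`: the part of `X` before the first mind change, with all entries halved
(and passes from the first mind change on). -/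
def pi0 (X : HatBaire) : HatBaire := fun n =>
  if ∃ m ≤ n, ∃ k, X m = some (2 * k + 1) then none
  else (X n).map fun k => k / 2

/-- The canonical `π₁`: the decoded part of `X` from the first mind change on (and all passes
if no mind change ever occurs). -/
def pi1 (X : HatBaire) : HatBaire := fun n =>
  if ∃ m, ∃ k, X m = some (2 * k + 1) then
    if n = 0 then (X (sInf {m | ∃ k, X m = some (2 * k + 1)})).map fun k => k / 2
    else X (sInf {m | ∃ k, X m = some (2 * k + 1)} + n)
  else none

/-- The mind-change operation on functions:
`(A→B)(X) = A(π₀ X)` if `π₁(X)^p` is empty, and `B(π₁ X)` otherwise. -/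
def mcArrow {Q : Type*} (A B : HatBaire → Q) : HatBaire → Q := fun X =>
  if ∀ n, pi1 X n = none then A (pi0 X) else B (pi1 X)

/-- The `Σ_T`-complete functions `Ω_T`, relative to a fixed `Σ⁰₂`-universal initializable
conciliatory function `𝒰`:
* `Ω_{⟨q⟩}` is the constant function with value `q` (equivalently `Ω_q ∘ 𝒰`);
* `Ω_{⟨S⟩} = Ω_S ∘ 𝒰`;
* `Ω_{⟨S⟩→F} = Ω_{⟨S⟩} → Ω_F`: the value is `Ω_{⟨S⟩}(π₀ X)` if no mind change occurs in `X`,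
  and `Ω_F(π₁ X)` otherwise (where `Ω_F(n⌢X') = Ω_{F_n}(X')`);
* `Ω_{⊔_n T_n}(n⌢X) = Ω_{T_n}(X)`. -/
def Omega {Q : Type u} (U : HatBaire → HatBaire) : Term Q → HatBaire → Q
  | .const q => fun _ => q
  | .jump _ T => fun X => Omega U T (U X)
  | .node B F => fun X =>
      if ∀ n, pi1 X n = none then Omega U B (pi0 X)
      else Omega U (F ((pi1 X 0).getD 0)) fun n => pi1 X (n + 1)
  | .sup F => fun X => Omega U (F ((X 0).getD 0)) fun n => X (n + 1)

/-- `Ω_T` as a function on `ω × ω̂^ω`: for a `⊔`-type term `⊔_n T_n` this is the function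
`(n, X) ↦ Ω_{T_n}(X)`; a tree is treated as a forest with a single (repeated) component,
i.e. `Ω_T` is composed with the (Wadge-irrelevant) projection. -/
def OmegaC {Q : Type u} (U : HatBaire → HatBaire) (T : Term Q) : ℕ × HatBaire → Q :=
  match T with
  | .sup F => fun p => Omega U (F p.1) p.2
  | t => fun p => Omega U t p.2

section Lemmas

open Set

variable {X : Type*} [TopologicalSpace X]

theorem sigmaZero_pos {α : Ordinal} {s : Set X} (h : SigmaZero X α s) : 1 ≤ α := by
  cases h with
  | of_isOpen h => exact le_refl 1
  | iUnion hα f β hβ hf => exact hα.le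

theorem isOpen_of_sigmaZero_one {s : Set X} (h : SigmaZero X 1 s) : IsOpen s := by
  cases h with
  | of_isOpen h => exact h
  | iUnion hα _ _ _ _ => exact absurd hα (lt_irrefl 1)

theorem sigmaZero_empty {α : Ordinal} (hα : 1 ≤ α) : SigmaZero X α (∅ : Set X) := by
  rcases eq_or_lt_of_le hα with h | h
  · rw [← h]; exact SigmaZero.of_isOpen isOpen_empty
  · have he : (∅ : Set X) = ⋃ _n : ℕ, (∅ : Set X) := (iUnion_const _).symm
    rw [he]
    exact SigmaZero.iUnion h _ (fun _ => 1) (fun _ => h)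
      (fun _ => by rw [compl_empty]; exact SigmaZero.of_isOpen isOpen_univ)

theorem sigmaZero_univ {α : Ordinal} (hα : 1 ≤ α) : SigmaZero X α (univ : Set X) := by
  rcases eq_or_lt_of_le hα with h | h
  · rw [← h]; exact SigmaZero.of_isOpen isOpen_univ
  · have he : (univ : Set X) = ⋃ _n : ℕ, (univ : Set X) := (iUnion_const _).symm
    rw [he]
    exact SigmaZero.iUnion h _ (fun _ => 1) (fun _ => h)
      (fun _ => by rw [compl_univ]; exact SigmaZero.of_isOpen isOpen_empty)

theorem sigmaZero_of_isClosed {α : Ordinal} {s : Set X} (hα : 2 ≤ α) (hs : IsClosed s) :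
    SigmaZero X α s := by
  have h1 : (1 : Ordinal) < α := lt_of_lt_of_le one_lt_two hα
  have he : s = ⋃ _n : ℕ, s := (iUnion_const _).symm
  rw [he]
  exact SigmaZero.iUnion h1 _ (fun _ => 1) (fun _ => h1)
    (fun _ => SigmaZero.of_isOpen hs.isOpen_compl)

theorem sigmaZero_iUnion_inv {α : Ordinal} {s : Set X} (hα : 1 < α) (h : SigmaZero X α s) :
    ∃ (f : ℕ → Set X) (β : ℕ → Ordinal), (∀ n, 1 ≤ β n) ∧ (∀ n, β n < α) ∧
      (∀ n, SigmaZero X (β n) (f n)ᶜ) ∧ s = ⋃ n, f n := by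
  cases h with
  | of_isOpen h => exact absurd hα (lt_irrefl 1)
  | iUnion hα' f β hβ hf => exact ⟨f, β, fun n => sigmaZero_pos (hf n), hβ, hf, rfl⟩

theorem sigmaZero_iUnion' {α : Ordinal} (hα : 1 ≤ α) {s : ℕ → Set X}
    (h : ∀ n, SigmaZero X α (s n)) : SigmaZero X α (⋃ n, s n) := by
  rcases eq_or_lt_of_le hα with h1 | h1
  · rw [← h1] at h ⊢
    exact SigmaZero.of_isOpen (isOpen_iUnion fun n => isOpen_of_sigmaZero_one (h n))
  · choose f β hβ1 hβα hf hs using fun n => sigmaZero_iUnion_inv h1 (h n)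
    let e : ℕ ≃ ℕ × ℕ := (Denumerable.eqv (ℕ × ℕ)).symm
    have he : (⋃ n, s n) = ⋃ k, f (e k).1 (e k).2 := by
      ext x
      simp only [mem_iUnion]
      constructor
      · rintro ⟨n, hx⟩
        rw [hs n] at hx
        rcases mem_iUnion.mp hx with ⟨m, hm⟩
        exact ⟨e.symm (n, m), by simpa using hm⟩
      · rintro ⟨k, hk⟩
        exact ⟨(e k).1, by rw [hs]; exact mem_iUnion.mpr ⟨(e k).2, hk⟩⟩
    rw [he]
    exact SigmaZero.iUnion h1 _ (fun k => β (e k).1 (e k).2) (fun k => hβα _ _)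
      (fun k => hf _ _)

theorem sigmaZero_union {α : Ordinal} (hα : 1 ≤ α) {s t : Set X} (hs : SigmaZero X α s)
    (ht : SigmaZero X α t) : SigmaZero X α (s ∪ t) := by
  have he : s ∪ t = ⋃ n : ℕ, (if n = 0 then s else t) := by
    apply Subset.antisymm
    · rintro x (hx | hx)
      · exact mem_iUnion.mpr ⟨0, by simpa using hx⟩
      · exact mem_iUnion.mpr ⟨1, by simpa using hx⟩
    · intro x hx
      rcases mem_iUnion.mp hx with ⟨n, hn⟩
      by_cases h0 : n = 0
      · left; simpa [h0] using hn
      · right; simpa [h0] using hn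
  rw [he]
  apply sigmaZero_iUnion' hα
  intro n
  by_cases h0 : n = 0
  · simpa [h0] using hs
  · simpa [h0] using ht

theorem sigmaZero_preimage {Y : Type*} [TopologicalSpace Y] {g : X → Y} (hg : Continuous g) :
    ∀ {α : Ordinal} {s : Set Y}, SigmaZero Y α s → SigmaZero X α (g ⁻¹' s) := by
  intro α s h
  induction h with
  | of_isOpen h => exact SigmaZero.of_isOpen (h.preimage hg)
  | iUnion hα f β hβ hf ih =>
    rw [preimage_iUnion]
    exact SigmaZero.iUnion hα _ β hβ (fun n => by rw [← preimage_compl]; exact ih n)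

def FSig (X : Type*) [TopologicalSpace X] : Prop :=
  ∀ U : Set X, IsOpen U → ∃ F : ℕ → Set X, (∀ n, IsClosed (F n)) ∧ U = ⋃ n, F n

theorem fSig_of_metrizable (X : Type*) [TopologicalSpace X]
    [TopologicalSpace.PseudoMetrizableSpace X] : FSig X := by
  letI := TopologicalSpace.pseudoMetrizableSpacePseudoMetric X
  intro U hU
  by_cases hne : Uᶜ.Nonempty
  · refine ⟨fun n => {x | (1 : ℝ) / (n + 1) ≤ Metric.infDist x Uᶜ}, fun n => ?_, ?_⟩
    · exact isClosed_le continuous_const (Metric.continuous_infDist_pt _)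
    · apply Subset.antisymm
      · intro x hx
        have hxn : x ∉ Uᶜ := by simpa using hx
        have hpos : 0 < Metric.infDist x Uᶜ :=
          (hU.isClosed_compl.notMem_iff_infDist_pos hne).mp hxn
        obtain ⟨n, hn⟩ := exists_nat_one_div_lt hpos
        exact mem_iUnion.mpr ⟨n, le_of_lt hn⟩
      · intro x hx
        rcases mem_iUnion.mp hx with ⟨n, hn⟩
        by_contra hxU
        have h0 : Metric.infDist x Uᶜ = 0 := Metric.infDist_zero_of_mem (by exact hxU)
        simp only [mem_setOf_eq, h0] at hn
        have : (0 : ℝ) < 1 / (n + 1) := by positivity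
        linarith
  · have hu : U = univ := by
      rwa [not_nonempty_iff_eq_empty, compl_empty_iff] at hne
    exact ⟨fun _ => univ, fun _ => isClosed_univ, by rw [hu]; exact (iUnion_const _).symm⟩

theorem sigmaZero_mono (hX : FSig X) {α γ : Ordinal} (hγ : α ≤ γ) {s : Set X}
    (h : SigmaZero X α s) : SigmaZero X γ s := by
  rcases eq_or_lt_of_le hγ with rfl | hlt
  · exact h
  cases h with
  | of_isOpen hop =>
    obtain ⟨F, hF, hU⟩ := hX _ hop
    rw [hU]
    exact SigmaZero.iUnion hlt F (fun _ => 1) (fun _ => hlt)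
      (fun n => SigmaZero.of_isOpen (hF n).isOpen_compl)
  | iUnion hα f β hβ hf =>
    exact SigmaZero.iUnion (lt_trans hα hlt) f β (fun n => lt_trans (hβ n) hlt) hf

theorem mem_image_val {U : Set X} {s : Set U} {x : X} :
    x ∈ (Subtype.val '' s) ↔ ∃ h : x ∈ U, (⟨x, h⟩ : U) ∈ s := by
  constructor
  · rintro ⟨y, hy, rfl⟩
    exact ⟨y.2, by simpa using hy⟩
  · rintro ⟨h, hs⟩
    exact ⟨⟨x, h⟩, hs, rfl⟩

theorem sigmaZero_image_open (hX : FSig X) {U : Set X} (hU : IsOpen U) :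
    ∀ {α : Ordinal} {s : Set U}, SigmaZero U α s → SigmaZero X α (Subtype.val '' s) := by
  intro α s h
  induction h with
  | of_isOpen hop => exact SigmaZero.of_isOpen (hU.isOpenMap_subtype_val _ hop)
  | @iUnion α hα f β hβ hf ih =>
    obtain ⟨G, hGc, hGU⟩ := hX U hU
    have hGsub : ∀ m, G m ⊆ U := fun m => hGU ▸ subset_iUnion G m
    let e : ℕ ≃ ℕ × ℕ := (Denumerable.eqv (ℕ × ℕ)).symm
    have key : ∀ n m, ((Subtype.val '' (f n)) ∩ G m)ᶜ =
        (Subtype.val '' ((f n)ᶜ)) ∪ (G m)ᶜ := by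
      intro n m
      ext x
      by_cases hxG : x ∈ G m
      · have hxU : x ∈ U := hGsub m hxG
        simp only [mem_compl_iff, mem_inter_iff, mem_union, mem_image_val]
        constructor
        · intro hx
          left
          refine ⟨hxU, ?_⟩
          intro hmem
          exact hx ⟨⟨hxU, hmem⟩, hxG⟩
        · rintro (⟨h1, h2⟩ | hG)
          · rintro ⟨⟨h3, h4⟩, -⟩
            exact h2 h4
          · exact absurd hxG hG
      · simp [hxG]
    have cover : ∀ n, Subtype.val '' (f n) ⊆ U := by
      rintro n x ⟨y, -, rfl⟩
      exact y.2
    have hrw : Subtype.val '' (⋃ n, f n) =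
        ⋃ k, ((Subtype.val '' (f (e k).1)) ∩ G (e k).2) := by
      ext x
      rw [image_iUnion]
      simp only [mem_iUnion, mem_inter_iff]
      constructor
      · rintro ⟨n, hx⟩
        have hxU : x ∈ U := cover n hx
        rw [hGU] at hxU
        rcases mem_iUnion.mp hxU with ⟨m, hm⟩
        refine ⟨e.symm (n, m), ?_⟩
        simpa using And.intro hx hm
      · rintro ⟨k, hk, -⟩
        exact ⟨(e k).1, hk⟩
    rw [hrw]
    apply SigmaZero.iUnion hα _ (fun k => β (e k).1) (fun k => hβ _)
    intro k
    rw [key _ _]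
    exact sigmaZero_union (sigmaZero_pos (hf (e k).1)) (ih (e k).1)
      (sigmaZero_mono hX (sigmaZero_pos (hf (e k).1))
        (SigmaZero.of_isOpen (hGc (e k).2).isOpen_compl))

theorem sigmaZero_image_closed (hX : FSig X) {U : Set X} (hU : IsClosed U) :
    ∀ {α : Ordinal} {s : Set U}, SigmaZero U α s → 2 ≤ α →
      SigmaZero X α (Subtype.val '' s) := by
  intro α s h
  induction h with
  | of_isOpen hop => intro h2; exact absurd h2 (by norm_num)
  | @iUnion α hα f β hβ hf ih =>
    intro _
    have compl_id : ∀ n : ℕ, (Subtype.val '' (f n))ᶜ =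
        (Subtype.val '' ((f n)ᶜ)) ∪ Uᶜ := by
      intro n
      ext x
      by_cases hxU : x ∈ U
      · simp only [mem_compl_iff, mem_union, mem_image_val]
        constructor
        · intro hx
          left
          exact ⟨hxU, fun hmem => hx ⟨hxU, hmem⟩⟩
        · rintro (⟨h1, h2⟩ | hG)
          · rintro ⟨h3, h4⟩
            exact h2 h4
          · exact absurd hxU hG
      · simp only [mem_compl_iff, mem_union, mem_image_val]
        constructor
        · intro _; right; exact hxU
        · rintro - ⟨h3, -⟩
          exact hxU h3
    rw [image_iUnion]
    apply SigmaZero.iUnion hα _ β hβ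
    intro n
    rcases eq_or_lt_of_le (sigmaZero_pos (hf n)) with hb1 | hb2
    · have hopc : IsOpen ((f n)ᶜ) := isOpen_of_sigmaZero_one (by rw [hb1]; exact hf n)
      have hcl : IsClosed (f n) := ⟨hopc⟩
      have himg : IsClosed (Subtype.val '' (f n)) := hU.isClosedMap_subtype_val _ hcl
      rw [← hb1]
      exact SigmaZero.of_isOpen himg.isOpen_compl
    · have h2 : (2 : Ordinal) ≤ β n := by
        have := Order.succ_le_of_lt hb2
        rw [← Ordinal.add_one_eq_succ, one_add_one_eq_two] at this
        exact this
      rw [compl_id n]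
      exact sigmaZero_union (sigmaZero_pos (hf n)) (ih n h2)
        (sigmaZero_mono hX (sigmaZero_pos (hf n))
          (SigmaZero.of_isOpen hU.isOpen_compl))

end Lemmas

section BaireLemmas

open Set

theorem initSeg_get (x : Baire) (n : ℕ) (i : Fin (initSeg x n).length) :
    (initSeg x n).get i = x i := by
  rw [List.get_eq_getElem]; simp [initSeg]

theorem isOpen_cylB (σ : List ℕ) : IsOpen (cylB σ) := by
  have he : cylB σ = ⋂ i : Fin σ.length, (fun X : Baire => X (i : ℕ)) ⁻¹' {σ.get i} := by
    ext X
    simp [cylB, Set.mem_iInter]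
  rw [he]
  exact isOpen_iInter_of_finite fun i =>
    (continuous_apply (i : ℕ)).isOpen_preimage _ (isOpen_discrete _)

theorem isOpen_baire_iUnion_cyl {U : Set Baire} (hU : IsOpen U) :
    ∃ g : ℕ → Set Baire, (∀ n, g n = ∅ ∨ ∃ σ, g n = cylB σ) ∧ U = ⋃ n, g n := by
  let e : ℕ ≃ List ℕ := (Denumerable.eqv (List ℕ)).symm
  refine ⟨fun n => if cylB (e n) ⊆ U then cylB (e n) else ∅, fun n => ?_, ?_⟩
  · by_cases h : cylB (e n) ⊆ U
    · right; exact ⟨e n, by dsimp only; rw [if_pos h]⟩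
    · left; dsimp only; rw [if_neg h]
  · apply Subset.antisymm
    · intro x hx
      obtain ⟨I, u, hu, hsub⟩ := isOpen_pi_iff.mp hU x hx
      set n := (I.sup id) + 1 with hn
      have hlen : (initSeg x n).length = n := by simp [initSeg, hn]
      have hcyl : cylB (initSeg x n) ⊆ U := by
        intro y hy
        apply hsub
        rw [Set.mem_pi]
        intro i hi
        have hilt : i < n := Nat.lt_succ_of_le (Finset.le_sup (f := id) hi)
        have hyx : y i = x i := by
          have h2 := hy ⟨i, by rw [hlen]; exact hilt⟩
          rwa [initSeg_get] at h2
        rw [hyx]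
        exact (hu i hi).2
      have hxc : x ∈ cylB (initSeg x n) := by
        intro i
        rw [initSeg_get]
      refine mem_iUnion.mpr ⟨e.symm (initSeg x n), ?_⟩
      rw [show e (e.symm (initSeg x n)) = initSeg x n from e.apply_symm_apply _, if_pos hcyl]
      exact hxc
    · intro x hx
      rcases mem_iUnion.mp hx with ⟨n, hn⟩
      by_cases h : cylB (e n) ⊆ U
      · exact h (by rw [if_pos h] at hn; exact hn)
      · rw [if_neg h] at hn
        exact absurd hn (notMem_empty x)

variable {X : Type*} [TopologicalSpace X]

theorem sigmaZero_comp {δ : Ordinal} {g : X → Baire}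
    (hg : ∀ σ : List ℕ, SigmaZero X (1 + δ) (g ⁻¹' cylB σ)) :
    ∀ {γ : Ordinal} {s : Set Baire}, SigmaZero Baire γ s → ∀ {η : Ordinal}, γ = 1 + η →
      SigmaZero X (1 + (δ + η)) (g ⁻¹' s) := by
  intro γ s h
  induction h with
  | @of_isOpen s hop =>
    intro η hη
    have hη0 : η = 0 := by
      have h10 : (1 : Ordinal) + 0 = 1 + η := by simpa using hη
      exact (add_left_cancel h10).symm
    subst hη0
    rw [add_zero]
    obtain ⟨gfam, hgfam, hUg⟩ := isOpen_baire_iUnion_cyl hop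
    rw [hUg, preimage_iUnion]
    apply sigmaZero_iUnion' (le_self_add (a := (1 : Ordinal)) (b := δ))
    intro n
    rcases hgfam n with h0 | ⟨σ, hσ⟩
    · rw [h0, preimage_empty]
      exact sigmaZero_empty (le_self_add (a := (1 : Ordinal)) (b := δ))
    · rw [hσ]
      exact hg σ
  | @iUnion α hα f β hβ hf ih =>
    intro η hη
    subst hη
    have hη1 : (1 : Ordinal) ≤ η := by
      by_contra hc
      push_neg at hc
      have hz : η = 0 := Ordinal.lt_one_iff_zero.mp hc
      rw [hz, add_zero] at hα
      exact lt_irrefl _ hα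
    rw [preimage_iUnion]
    have h2 : (1 : Ordinal) < 1 + (δ + η) := by
      calc (1 : Ordinal) < 1 + 1 := ord_lt_add_one 1
      _ ≤ 1 + (δ + η) := (add_le_add_iff_left 1).mpr (le_trans hη1 (le_add_self (a := η) (b := δ)))
    apply SigmaZero.iUnion h2 _ (fun n => 1 + (δ + (β n - 1)))
    · intro n
      have hb : (1 : Ordinal) ≤ β n := sigmaZero_pos (hf n)
      have hbeq : 1 + (β n - 1) = β n := Ordinal.add_sub_cancel_of_le hb
      have hlt : β n - 1 < η := by
        have h3 : 1 + (β n - 1) < 1 + η := by rw [hbeq]; exact hβ n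
        exact (add_lt_add_iff_left 1).mp h3
      exact (add_lt_add_iff_left 1).mpr ((add_lt_add_iff_left δ).mpr hlt)
    · intro n
      have hb : (1 : Ordinal) ≤ β n := sigmaZero_pos (hf n)
      have hbeq : 1 + (β n - 1) = β n := Ordinal.add_sub_cancel_of_le hb
      rw [← preimage_compl]
      exact ih n hbeq.symm

theorem transfer_open {D E P : Set Baire} {W : Set (↥D)} {γ : Ordinal} (hW : IsOpen W)
    (hsub : ∀ x : ↥D, x ∈ W → x.1 ∈ E)
    (h : SigmaZero (↥E) γ ((Subtype.val : ↥E → Baire) ⁻¹' P)) :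
    SigmaZero (↥D) γ (((Subtype.val : ↥D → Baire) ⁻¹' P) ∩ W) := by
  let m : ↥W → ↥E := fun y => ⟨y.1.1, hsub y.1 y.2⟩
  have hm : Continuous m :=
    Continuous.subtype_mk (continuous_subtype_val.comp continuous_subtype_val) _
  have h1 : SigmaZero (↥W) γ (m ⁻¹' ((Subtype.val : ↥E → Baire) ⁻¹' P)) :=
    sigmaZero_preimage hm h
  have h2 : m ⁻¹' ((Subtype.val : ↥E → Baire) ⁻¹' P) =
      (Subtype.val : ↥W → ↥D) ⁻¹' ((Subtype.val : ↥D → Baire) ⁻¹' P) := rfl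
  rw [h2] at h1
  have h3 := sigmaZero_image_open (fSig_of_metrizable (↥D)) hW h1
  rwa [Set.image_preimage_eq_inter_range, Subtype.range_coe] at h3

theorem transfer_closed {D E P : Set Baire} {W : Set (↥D)} {γ : Ordinal} (hW : IsClosed W)
    (hγ : 2 ≤ γ) (hsub : ∀ x : ↥D, x ∈ W → x.1 ∈ E)
    (h : SigmaZero (↥E) γ ((Subtype.val : ↥E → Baire) ⁻¹' P)) :
    SigmaZero (↥D) γ (((Subtype.val : ↥D → Baire) ⁻¹' P) ∩ W) := by
  let m : ↥W → ↥E := fun y => ⟨y.1.1, hsub y.1 y.2⟩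
  have hm : Continuous m :=
    Continuous.subtype_mk (continuous_subtype_val.comp continuous_subtype_val) _
  have h1 : SigmaZero (↥W) γ (m ⁻¹' ((Subtype.val : ↥E → Baire) ⁻¹' P)) :=
    sigmaZero_preimage hm h
  have h2 : m ⁻¹' ((Subtype.val : ↥E → Baire) ⁻¹' P) =
      (Subtype.val : ↥W → ↥D) ⁻¹' ((Subtype.val : ↥D → Baire) ⁻¹' P) := rfl
  rw [h2] at h1
  have h3 := sigmaZero_image_closed (fSig_of_metrizable (↥D)) hW h1 hγ
  rwa [Set.image_preimage_eq_inter_range, Subtype.range_coe] at h3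

end BaireLemmas

section MainProof

open Set

theorem sigmaT_delta {Q : Type u} {T : Term Q} {D : Set Baire} {A : Baire → Q}
    (h : SigmaT T D A) : ∀ ξ : Ordinal.{0}, IsForestXi ξ T →
      (∃ R : Set Q, R.Countable ∧ ∀ x ∈ D, A x ∈ R) ∧
      ∀ q : Q, SigmaZero (↥D) (1 + ξ) ((fun x : ↥D => A x.1) ⁻¹' {q}) ∧
               SigmaZero (↥D) (1 + ξ) (((fun x : ↥D => A x.1) ⁻¹' {q})ᶜ) := by
  induction h with
  | const q D A hc =>
    intro ξ _
    refine ⟨⟨{q}, countable_singleton q, fun x hx => by simp [hc x hx]⟩, fun q' => ?_⟩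
    by_cases hq : q = q'
    · have h1 : ((fun x : ↥D => A x.1) ⁻¹' {q'}) = univ := by
        ext x; simp [hc x.1 x.2, hq]
      rw [h1, compl_univ]
      exact ⟨sigmaZero_univ (le_self_add (a := (1 : Ordinal)) (b := ξ)),
        sigmaZero_empty (le_self_add (a := (1 : Ordinal)) (b := ξ))⟩
    · have h1 : ((fun x : ↥D => A x.1) ⁻¹' {q'}) = ∅ := by
        ext x; simp [hc x.1 x.2, hq]
      rw [h1, compl_empty]
      exact ⟨sigmaZero_empty (le_self_add (a := (1 : Ordinal)) (b := ξ)),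
        sigmaZero_univ (le_self_add (a := (1 : Ordinal)) (b := ξ))⟩
  | sup S D A C hcl hpart h ih =>
    intro ξ hξ
    have hS : ∀ i, IsTreeXi ξ (S i) := by
      rcases hξ with htree | ⟨F, hEq, hF⟩
      · cases htree
      · injection hEq with h'
        rw [h']; exact hF
    have ih' := fun i => ih i ξ (Or.inl (hS i))
    refine ⟨?_, ?_⟩
    · choose R hRc hR using fun i => (ih' i).1
      refine ⟨⋃ i, R i, countable_iUnion hRc, fun x hx => ?_⟩
      obtain ⟨i, hi, -⟩ := hpart x hx
      exact mem_iUnion.mpr ⟨i, hR i x ⟨hx, hi⟩⟩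
    · intro q
      have hcov : ∀ x : ↥D, ∃ i, x ∈ ((fun x : ↥D => x.1) ⁻¹' C i : Set ↥D) := by
        intro x
        obtain ⟨i, hi, -⟩ := hpart x.1 x.2
        exact ⟨i, hi⟩
      constructor
      · have he : ((fun x : ↥D => A x.1) ⁻¹' {q}) =
            ⋃ i, (((Subtype.val : ↥D → Baire) ⁻¹' (A ⁻¹' {q})) ∩
              ((fun x : ↥D => x.1) ⁻¹' C i)) := by
          apply Subset.antisymm
          · intro x hx
            obtain ⟨i, hi⟩ := hcov x
            exact mem_iUnion.mpr ⟨i, hx, hi⟩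
          · intro x hx
            rcases mem_iUnion.mp hx with ⟨i, hx1, -⟩
            exact hx1
        rw [he]
        apply sigmaZero_iUnion' (le_self_add (a := (1 : Ordinal)) (b := ξ))
        intro i
        exact transfer_open (E := D ∩ C i) (hcl i).2 (fun x hx => ⟨x.2, hx⟩) ((ih' i).2 q).1
      · have he : (((fun x : ↥D => A x.1) ⁻¹' {q})ᶜ) =
            ⋃ i, (((Subtype.val : ↥D → Baire) ⁻¹' ((A ⁻¹' {q})ᶜ)) ∩
              ((fun x : ↥D => x.1) ⁻¹' C i)) := by
          apply Subset.antisymm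
          · intro x hx
            obtain ⟨i, hi⟩ := hcov x
            exact mem_iUnion.mpr ⟨i, hx, hi⟩
          · intro x hx
            rcases mem_iUnion.mp hx with ⟨i, hx1, -⟩
            exact hx1
        rw [he]
        apply sigmaZero_iUnion' (le_self_add (a := (1 : Ordinal)) (b := ξ))
        intro i
        refine transfer_open (E := D ∩ C i) (hcl i).2 (fun x hx => ⟨x.2, hx⟩) ?_
        have h2 := ((ih' i).2 q).2
        rw [preimage_compl]
        exact h2
  | node B F D A V hV h1 h2 ih1 ih2 =>
    intro ξ hξ
    have htree : IsTreeXi ξ (Term.node B F) := by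
      rcases hξ with htree | ⟨G, hEq, -⟩
      · exact htree
      · exact absurd hEq (by simp)
    cases htree with
    | node h0 hB hbase hF =>
    have h2le : (2 : Ordinal) ≤ 1 + ξ := by
      have h1le : (1 : Ordinal) ≤ ξ := Ordinal.one_le_iff_ne_zero.mpr h0
      calc (2 : Ordinal) = 1 + 1 := by norm_num
      _ ≤ 1 + ξ := (add_le_add_iff_left 1).mpr h1le
    obtain ⟨⟨R1, hR1c, hR1⟩, hfib1⟩ := ih1 ξ (Or.inl hB)
    obtain ⟨⟨R2, hR2c, hR2⟩, hfib2⟩ := ih2 ξ (Or.inr ⟨F, rfl, hF⟩)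
    refine ⟨⟨R1 ∪ R2, hR1c.union hR2c, fun x hx => ?_⟩, ?_⟩
    · by_cases hxV : x ∈ V
      · exact Or.inr (hR2 x ⟨hx, hxV⟩)
      · exact Or.inl (hR1 x ⟨hx, hxV⟩)
    · intro q
      have hWc : IsClosed (((fun x : ↥D => x.1) ⁻¹' V)ᶜ) := hV.isClosed_compl
      constructor
      · have he : ((fun x : ↥D => A x.1) ⁻¹' {q}) =
            (((Subtype.val : ↥D → Baire) ⁻¹' (A ⁻¹' {q})) ∩ ((fun x : ↥D => x.1) ⁻¹' V)) ∪
            (((Subtype.val : ↥D → Baire) ⁻¹' (A ⁻¹' {q})) ∩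
              (((fun x : ↥D => x.1) ⁻¹' V)ᶜ)) := by
          rw [← inter_union_distrib_left, union_compl_self, inter_univ]
          rfl
        rw [he]
        apply sigmaZero_union (le_self_add (a := (1 : Ordinal)) (b := ξ))
        · exact transfer_open (E := D ∩ V) hV (fun x hx => ⟨x.2, hx⟩) ((hfib2 q).1)
        · exact transfer_closed (E := D \ V) hWc h2le (fun x hx => ⟨x.2, hx⟩) ((hfib1 q).1)
      · have he : (((fun x : ↥D => A x.1) ⁻¹' {q})ᶜ) =
            (((Subtype.val : ↥D → Baire) ⁻¹' ((A ⁻¹' {q})ᶜ)) ∩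
              ((fun x : ↥D => x.1) ⁻¹' V)) ∪
            (((Subtype.val : ↥D → Baire) ⁻¹' ((A ⁻¹' {q})ᶜ)) ∩
              (((fun x : ↥D => x.1) ⁻¹' V)ᶜ)) := by
          rw [← inter_union_distrib_left, union_compl_self, inter_univ]
          rfl
        rw [he]
        apply sigmaZero_union (le_self_add (a := (1 : Ordinal)) (b := ξ))
        · refine transfer_open (E := D ∩ V) hV (fun x hx => ⟨x.2, hx⟩) ?_
          rw [preimage_compl]; exact (hfib2 q).2
        · refine transfer_closed (E := D \ V) hWc h2le (fun x hx => ⟨x.2, hx⟩) ?_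
          rw [preimage_compl]; exact (hfib1 q).2
  | jump γord T' D A D' B hD hB hA ihB =>
    intro ξ hξ
    have htree : IsTreeXi ξ (Term.jump γord T') := by
      rcases hξ with htree | ⟨G, hEq, -⟩
      · exact htree
      · exact absurd hEq (by simp)
    -- common machinery
    have main : ∀ ξ' : Ordinal.{0}, IsTreeXi ξ' T' →
        Ordinal.omega0 ^ γord + ξ' = ξ →
        (∃ R : Set Q, R.Countable ∧ ∀ x ∈ D, A x ∈ R) ∧
        ∀ q : Q, SigmaZero (↥D) (1 + ξ) ((fun x : ↥D => A x.1) ⁻¹' {q}) ∧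
                 SigmaZero (↥D) (1 + ξ) (((fun x : ↥D => A x.1) ⁻¹' {q})ᶜ) := by
      intro ξ' hT' habs
      obtain ⟨⟨R, hRc, hR⟩, hfib⟩ := ihB ξ' (Or.inl hT')
      refine ⟨⟨R, hRc, fun x hx => ?_⟩, ?_⟩
      · rw [hA x hx]
        exact hR (D' x) (Set.mem_univ _)
      intro q
      obtain ⟨hfq, hfqc⟩ := hfib q
      let u : Baire → ↥(univ : Set Baire) := fun x => ⟨x, trivial⟩
      have hu : Continuous u := Continuous.subtype_mk continuous_id _
      have hBq : SigmaZero Baire (1 + ξ') (B ⁻¹' {q}) := sigmaZero_preimage hu hfq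
      have hBqc : SigmaZero Baire (1 + ξ') ((B ⁻¹' {q})ᶜ) := sigmaZero_preimage hu hfqc
      have hg : ∀ σ : List ℕ, SigmaZero (↥D) (1 + Ordinal.omega0 ^ γord)
          ((fun x : ↥D => D' x.1) ⁻¹' cylB σ) := hD
      have hcomp := sigmaZero_comp hg hBq (rfl : 1 + ξ' = 1 + ξ')
      have hcompc := sigmaZero_comp hg hBqc (rfl : 1 + ξ' = 1 + ξ')
      rw [habs] at hcomp hcompc
      have hset : ((fun x : ↥D => D' x.1) ⁻¹' (B ⁻¹' {q})) =
          ((fun x : ↥D => A x.1) ⁻¹' {q}) := by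
        ext x
        simp [hA x.1 x.2]
      have hsetc : ((fun x : ↥D => D' x.1) ⁻¹' ((B ⁻¹' {q})ᶜ)) =
          (((fun x : ↥D => A x.1) ⁻¹' {q})ᶜ) := by
        ext x
        simp [hA x.1 x.2]
      rw [hset] at hcomp
      rw [hsetc] at hcompc
      exact ⟨hcomp, hcompc⟩
    cases htree with
    | atom hne hS =>
      have hξ0 : ξ ≠ 0 := by
        intro hz
        subst hz
        exact hne (by simp [obeta, Ordinal.zero_sub])
      exact main (obeta ξ) hS
        (Ordinal.add_sub_cancel_of_le (Ordinal.opow_log_le_self _ hξ0))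
    | jump h0 hβlt hT' =>
      exact main ξ hT'
        (Ordinal.add_absorp
          ((Ordinal.opow_lt_opow_iff_right Ordinal.one_lt_omega0).mpr hβlt)
          (Ordinal.opow_log_le_self _ h0))

end MainProof


/-- Let `Q` be a quasi-order and `ξ` a countable ordinal.  For every term
`T ∈ ⊔Tree^ξ(Q)`, every function in the class `Σ_T` is `Δ⁰_{1+ξ}`-measurable. -/
theorem sigmaT_functions_are_delta_measurable (Q : Type u) [Preorder Q] (ξ : Ordinal.{0})
    (hξ : IsCountableOrd ξ) (T : Term Q) (hT : IsForestXi ξ T) (A : Baire → Q)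
    (hA : MemSigmaT T A) :
    DeltaMeasurable (1 + ξ) A := by
  obtain ⟨⟨R, hRc, hR⟩, hfib⟩ := sigmaT_delta hA ξ hT
  constructor
  · exact Set.Countable.mono (by rintro q ⟨x, rfl⟩; exact hR x (Set.mem_univ x)) hRc
  · intro q
    obtain ⟨h1, h2⟩ := hfib q
    let u : Baire → ↥(Set.univ : Set Baire) := fun x => ⟨x, trivial⟩
    have hu : Continuous u := Continuous.subtype_mk continuous_id _
    exact ⟨sigmaZero_preimage hu h1, sigmaZero_preimage hu h2⟩


end WadgeStudy
end
end

section
/- A function G: ω^{≤ω} → ω^{≤ω} can be represented as a continuous conciliatory function (i.e., there exists a continuous conciliatory Ĝ: ω̂^ω → ω̂^ω with Ĝ(X)^p = G(X^p) for all X ∈ ω̂^ω) if and only if both: (i) σ ⊆ τ implies G(σ) ⊆ G(τ) for all σ, τ ∈ ω^{<ω}, and (ii) G(X) = ⋃_n G(X↾n) for every X ∈ ω^ω. -/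
/-!
Common definitions for formalizing "On the structure of the Wadge degrees of bqo-valued
Borel functions" by Kihara and Montalbán.
-/

open scoped Classical
noncomputable section

namespace WadgeStudy

/-! ### Auxiliary machinery for Statement 8 -/

/-- Number of non-`pass` entries among the first `n` entries of `X`. -/
def cnt (X : HatBaire) : ℕ → ℕ
  | 0 => 0
  | n + 1 => cnt X n + if (X n).isSome then 1 else 0

/-- The list of non-`pass` entries among the first `n` entries of `X`. -/
def collect (X : HatBaire) : ℕ → List ℕ
  | 0 => []
  | n + 1 => collect X n ++ (X n).toList

theorem collect_length (X : HatBaire) : ∀ n, (collect X n).length = cnt X n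
  | 0 => rfl
  | n + 1 => by
    simp only [collect, cnt, List.length_append, collect_length X n]
    cases h : X n <;> simp [h]

theorem cnt_le_succ (X : HatBaire) (n : ℕ) : cnt X n ≤ cnt X (n + 1) := Nat.le_add_right _ _

theorem cnt_succ_le (X : HatBaire) (n : ℕ) : cnt X (n + 1) ≤ cnt X n + 1 := by
  simp only [cnt]; split <;> omega

theorem cnt_mono (X : HatBaire) : ∀ {m n : ℕ}, m ≤ n → cnt X m ≤ cnt X n := by
  intro m n h
  induction h with
  | refl => exact le_rfl
  | step _ ih => exact le_trans ih (cnt_le_succ X _)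

theorem cnt_some (X : HatBaire) {j : ℕ} (h : (X j).isSome) : cnt X (j + 1) = cnt X j + 1 := by
  simp [cnt, h]

theorem cnt_lt_of_some (X : HatBaire) {j n : ℕ} (hj : (X j).isSome) (hn : j < n) :
    cnt X j < cnt X n := by
  have h1 := cnt_some X hj
  have h2 := cnt_mono X (show j + 1 ≤ n from hn)
  omega

theorem cnt_eq_of_none (X : HatBaire) {m : ℕ} :
    ∀ {n : ℕ}, m ≤ n → (∀ j, m ≤ j → j < n → X j = none) → cnt X n = cnt X m := by
  intro n
  induction n with
  | zero => intro h _; simp [Nat.le_zero.mp h]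
  | succ n ih =>
    intro hmn hnone
    rcases Nat.lt_or_ge m (n + 1) with h | h
    · have hm : m ≤ n := by omega
      have hXn : X n = none := hnone n hm (by omega)
      simp only [cnt, hXn, Option.isSome_none, if_neg Bool.false_ne_true]
      rw [ih hm fun j h1 h2 => hnone j h1 (by omega)]
      omega
    · have : m = n + 1 := by omega
      rw [this]

theorem collect_eq_of_none (X : HatBaire) {m : ℕ} :
    ∀ {n : ℕ}, m ≤ n → (∀ j, m ≤ j → j < n → X j = none) → collect X n = collect X m := by
  intro n
  induction n with
  | zero => intro h _; simp [Nat.le_zero.mp h]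
  | succ n ih =>
    intro hmn hnone
    rcases Nat.lt_or_ge m (n + 1) with h | h
    · have hm : m ≤ n := by omega
      have hXn : X n = none := hnone n hm (by omega)
      simp only [collect, hXn, Option.toList_none, List.append_nil]
      exact ih hm fun j h1 h2 => hnone j h1 (by omega)
    · have : m = n + 1 := by omega
      rw [this]

theorem collect_congr {X Y : HatBaire} : ∀ {n : ℕ}, (∀ j < n, Y j = X j) → collect Y n = collect X n := by
  intro n
  induction n with
  | zero => intro _; rfl
  | succ n ih =>
    intro h
    simp only [collect]
    rw [ih fun j hj => h j (by omega), h n (by omega)]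

theorem cnt_congr {X Y : HatBaire} {n : ℕ} (h : ∀ j < n, Y j = X j) : cnt Y n = cnt X n := by
  rw [← collect_length, ← collect_length, collect_congr h]

theorem exists_cnt_eq_of_lt {X : HatBaire} {k : ℕ} :
    ∀ {n : ℕ}, k < cnt X n → ∃ i < n, (X i).isSome ∧ cnt X i = k := by
  intro n
  induction n with
  | zero => intro h; simp [cnt] at h
  | succ n ih =>
    intro h
    rcases Nat.lt_or_ge k (cnt X n) with h' | h'
    · obtain ⟨i, h1, h2, h3⟩ := ih h'
      exact ⟨i, by omega, h2, h3⟩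
    · have hle := cnt_succ_le X n
      have hs : (X n).isSome := by
        by_contra hns
        simp only [cnt, hns, if_neg Bool.false_ne_true, ↓reduceIte] at h
        omega
      exact ⟨n, by omega, hs, by omega⟩

theorem nthSome_eq_some_iff (X : HatBaire) :
    ∀ {k i : ℕ}, nthSome X k = some i ↔ ((X i).isSome ∧ cnt X i = k) := by
  intro k
  induction k with
  | zero =>
    intro i
    constructor
    · intro h
      simp only [nthSome] at h
      split at h
      · rename_i hex
        cases h
        refine ⟨Nat.find_spec hex, ?_⟩
        have h0 : (0 : ℕ) ≤ Nat.find hex := Nat.zero_le _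
        rw [cnt_eq_of_none X h0 fun j _ hj =>
          Option.not_isSome_iff_eq_none.1 (Nat.find_min hex hj)]
        rfl
      · exact absurd h (by simp)
    · rintro ⟨hs, hc⟩
      have hex : ∃ j, (X j).isSome := ⟨i, hs⟩
      simp only [nthSome, dif_pos hex, Option.some_inj]
      rcases Nat.lt_or_ge (Nat.find hex) i with h | h
      · exact absurd hc (by have := cnt_lt_of_some X (Nat.find_spec hex) h; omega)
      · exact le_antisymm (Nat.find_min' hex hs) h
  | succ k ih =>
    intro i
    constructor
    · intro h
      cases hk : nthSome X k with
      | none => simp only [nthSome, hk] at h; exact absurd h (by simp)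
      | some i₀ =>
        simp only [nthSome, hk] at h
        split at h
        · rename_i hex
          cases h
          obtain ⟨hlt, hs⟩ := Nat.find_spec hex
          obtain ⟨hs₀, hc₀⟩ := ih.1 hk
          refine ⟨hs, ?_⟩
          have hgap : ∀ j, i₀ + 1 ≤ j → j < Nat.find hex → X j = none := by
            intro j h1 h2
            have := Nat.find_min hex h2
            push_neg at this
            exact Option.not_isSome_iff_eq_none.1 fun hj => absurd (this (by omega)) (by simp [hj])
          rw [cnt_eq_of_none X (by omega) hgap, cnt_some X hs₀, hc₀]
        · exact absurd h (by simp)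
    · rintro ⟨hs, hc⟩
      have hpos : 0 < cnt X i := by omega
      obtain ⟨j, hj, hjs, _⟩ := exists_cnt_eq_of_lt (X := X) (k := 0) hpos
      have hi0 : 0 < i := by omega
      have hjle : j ≤ i - 1 := by omega
      have hex₀ : ∃ i₀, i₀ < i ∧ (X i₀).isSome ∧ ∀ j', i₀ < j' → j' < i → X j' = none := by
        refine ⟨Nat.findGreatest (fun j => (X j).isSome = true) (i - 1), ?_, ?_, ?_⟩
        · have := Nat.findGreatest_le (P := fun j => (X j).isSome = true) (n := i - 1)
          omega
        · exact Nat.findGreatest_spec (P := fun j => (X j).isSome = true) hjle hjs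
        · intro j' h1 h2
          exact Option.not_isSome_iff_eq_none.1
            (Nat.findGreatest_is_greatest h1 (by omega))
      obtain ⟨i₀, hi₀lt, hP, hgr⟩ := hex₀
      have hci : cnt X i = cnt X i₀ + 1 := by
        rw [cnt_eq_of_none X (m := i₀ + 1) (by omega) fun j' h1 h2 => hgr j' (by omega) h2,
          cnt_some X hP]
      have hk : nthSome X k = some i₀ := ih.2 ⟨hP, by omega⟩
      have hex : ∃ j', i₀ < j' ∧ (X j').isSome := ⟨i, hi₀lt, hs⟩
      simp only [nthSome, hk, dif_pos hex, Option.some_inj]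
      rw [Nat.find_eq_iff]
      refine ⟨⟨hi₀lt, hs⟩, ?_⟩
      rintro j' hj' ⟨h1, h2⟩
      exact absurd (hgr j' h1 hj') (by intro h; rw [h] at h2; simp at h2)

theorem strip_get?_eq (X : HatBaire) (k : ℕ) :
    (strip X).get? k = (nthSome X k).bind fun i => X i := rfl

theorem strip_get?_eq_some_iff {X : HatBaire} {k a : ℕ} :
    (strip X).get? k = some a ↔ ∃ i, X i = some a ∧ cnt X i = k := by
  rw [strip_get?_eq]
  constructor
  · intro h
    cases hn : nthSome X k with
    | none => rw [hn] at h; exact absurd h (by simp)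
    | some i =>
      rw [hn, Option.bind_some] at h
      exact ⟨i, h, ((nthSome_eq_some_iff X).1 hn).2⟩
  · rintro ⟨i, ha, hc⟩
    rw [(nthSome_eq_some_iff X).2 ⟨by simp [ha], hc⟩, Option.bind_some]
    exact ha

theorem option_ext {o₁ o₂ : Option ℕ} (h : ∀ a, o₁ = some a ↔ o₂ = some a) : o₁ = o₂ := by
  cases o₁ with
  | none =>
    cases o₂ with
    | none => rfl
    | some b => exact ((h b).2 rfl)
  | some a =>
    exact ((h a).1 rfl).symm

theorem collect_get?_eq_some_iff {X : HatBaire} :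
    ∀ {n k a : ℕ}, (collect X n)[k]? = some a ↔ ∃ i < n, X i = some a ∧ cnt X i = k := by
  intro n
  induction n with
  | zero => intro k a; simp [collect]
  | succ n ih =>
    intro k a
    constructor
    · intro h
      simp only [collect] at h
      rcases Nat.lt_or_ge k (collect X n).length with hk | hk
      · rw [List.getElem?_append_left hk] at h
        obtain ⟨i, h1, h2, h3⟩ := ih.1 h
        exact ⟨i, by omega, h2, h3⟩
      · rw [List.getElem?_append_right hk] at h
        cases hXn : X n with
        | none => rw [hXn] at h; simp at h
        | some b =>
          rw [hXn] at h
          simp only [Option.toList_some] at h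
          have hlen := collect_length X n
          cases hm : k - (collect X n).length with
          | zero =>
            rw [hm] at h
            have hba : b = a := by simpa using h
            exact ⟨n, by omega, by rw [hXn, hba], by omega⟩
          | succ m => rw [hm] at h; simp at h
    · rintro ⟨i, hi, h2, h3⟩
      simp only [collect]
      rcases Nat.lt_or_ge i n with hin | hin
      · have hlt : k < (collect X n).length := by
          rw [collect_length]
          rw [← h3]
          exact cnt_lt_of_some X (by simp [h2]) hin
        rw [List.getElem?_append_left hlt]
        exact ih.2 ⟨i, hin, h2, h3⟩
      · have hieq : i = n := by omega
        subst hieq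
        have hlen := collect_length X i
        rw [List.getElem?_append_right (by omega)]
        rw [h2, Option.toList_some]
        have : k - (collect X i).length = 0 := by omega
        rw [this]
        rfl

/-- Pad a finite string with passes up to position `N`, then continue with `W`. -/
def padA (σ : List ℕ) (N : ℕ) (W : HatBaire) : HatBaire := fun n =>
  if n < N then σ[n]? else W (n - N)

theorem cnt_padA_le (σ : List ℕ) (N : ℕ) (W : HatBaire) (hN : σ.length ≤ N) :
    ∀ i, i ≤ N → cnt (padA σ N W) i = min i σ.length := by
  intro i
  induction i with
  | zero => intro _; simp [cnt]
  | succ i ih =>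
    intro hi
    have h1 : padA σ N W i = σ[i]? := if_pos (by omega)
    simp only [cnt, ih (by omega), h1]
    rcases Nat.lt_or_ge i σ.length with h | h
    · have hs : (σ[i]?).isSome := by
        rw [Option.isSome_iff_ne_none]
        intro hc
        rw [List.getElem?_eq_none_iff] at hc
        omega
      rw [if_pos hs]
      omega
    · rw [List.getElem?_eq_none_iff.2 h]
      simp only [Option.isSome_none, if_neg Bool.false_ne_true]
      omega

theorem padA_past (σ : List ℕ) (N : ℕ) (W : HatBaire) (j : ℕ) : padA σ N W (N + j) = W j := by
  simp only [padA]
  rw [if_neg (by omega)]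
  congr 1
  omega

theorem cnt_padA_add (σ : List ℕ) (N : ℕ) (W : HatBaire) (hN : σ.length ≤ N) :
    ∀ j, cnt (padA σ N W) (N + j) = σ.length + cnt W j := by
  intro j
  induction j with
  | zero =>
    rw [Nat.add_zero, cnt_padA_le σ N W hN N le_rfl]
    simp [cnt]
    omega
  | succ j ih =>
    have : N + (j + 1) = (N + j) + 1 := rfl
    rw [this]
    simp only [cnt, ih, padA_past σ N W j]
    exact Nat.add_assoc _ _ _

theorem strip_padA_get {σ : List ℕ} {N : ℕ} {W : HatBaire} (hN : σ.length ≤ N) {k a : ℕ} :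
    (strip (padA σ N W)).get? k = some a ↔
      (σ[k]? = some a ∨ (σ.length ≤ k ∧ (strip W).get? (k - σ.length) = some a)) := by
  rw [strip_get?_eq_some_iff]
  constructor
  · rintro ⟨i, hX, hc⟩
    rcases Nat.lt_or_ge i N with h | h
    · have h1 : padA σ N W i = σ[i]? := if_pos h
      rw [h1] at hX
      have hil : i < σ.length := by
        by_contra hc'
        rw [List.getElem?_eq_none_iff.2 (by omega)] at hX
        simp at hX
      have hcnt : cnt (padA σ N W) i = i := by
        rw [cnt_padA_le σ N W hN i (by omega)]
        omega
      have hki : k = i := by rw [← hc, hcnt]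
      left
      rw [hki]
      exact hX
    · obtain ⟨j, rfl⟩ : ∃ j, i = N + j := ⟨i - N, by omega⟩
      rw [padA_past σ N W j] at hX
      rw [cnt_padA_add σ N W hN j] at hc
      right
      exact ⟨by omega, strip_get?_eq_some_iff.2 ⟨j, hX, by omega⟩⟩
  · rintro (h | ⟨hk, h⟩)
    · have hkl : k < σ.length := by
        by_contra hc'
        rw [List.getElem?_eq_none_iff.2 (by omega)] at h
        simp at h
      refine ⟨k, ?_, ?_⟩
      · rw [show padA σ N W k = σ[k]? from if_pos (by omega)]
        exact h
      · rw [cnt_padA_le σ N W hN k (by omega)]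
        omega
    · obtain ⟨j, hW, hcW⟩ := strip_get?_eq_some_iff.1 h
      refine ⟨N + j, ?_, ?_⟩
      · rw [padA_past σ N W j]
        exact hW
      · rw [cnt_padA_add σ N W hN j]
        omega

/-- A finite string viewed as an element of `ω̂^ω` (padded with passes). -/
def ofL (σ : List ℕ) : HatBaire := fun n => σ[n]?

/-- An element of `ω^ω` viewed as an element of `ω̂^ω`. -/
def ofB (X : Baire) : HatBaire := fun n => some (X n)

theorem ofL_eq_padA (σ : List ℕ) : ofL σ = padA σ σ.length (fun _ => none) := by
  funext n
  simp only [ofL, padA]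
  split
  · rfl
  · rw [List.getElem?_eq_none_iff.2 (by omega)]

theorem strip_none_get (k : ℕ) : (strip (fun _ => (none : Hat))).get? k = none := by
  cases h : (strip fun _ => (none : Hat)).get? k with
  | none => rfl
  | some a =>
    obtain ⟨i, hi, -⟩ := strip_get?_eq_some_iff.1 h
    exact absurd hi (by simp)

theorem strip_ofL (σ : List ℕ) : strip (ofL σ) = ofList σ := by
  apply Stream'.Seq.ext
  intro n
  apply option_ext
  intro a
  rw [ofL_eq_padA, strip_padA_get le_rfl]
  show _ ↔ (Stream'.Seq.ofList σ).get? n = some a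
  rw [Stream'.Seq.ofList_get?, strip_none_get]
  constructor
  · rintro (h | ⟨-, h⟩)
    · exact h
    · exact absurd h (by simp)
  · exact Or.inl

theorem cnt_ofB (X : Baire) : ∀ n, cnt (ofB X) n = n
  | 0 => rfl
  | n + 1 => by simp [cnt, ofB, cnt_ofB X n]

theorem strip_ofB (X : Baire) : strip (ofB X) = ofBaire X := by
  apply Stream'.Seq.ext
  intro n
  apply option_ext
  intro a
  have hr : (ofBaire X).get? n = some (X n) := rfl
  rw [hr, strip_get?_eq_some_iff]
  constructor
  · rintro ⟨i, hi, hc⟩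
    rw [cnt_ofB] at hc
    subst hc
    simpa [ofB] using hi
  · intro h
    exact ⟨n, by simpa [ofB] using h, cnt_ofB X n⟩

theorem isOpen_agree (X : HatBaire) (n : ℕ) : IsOpen {Y : HatBaire | ∀ j < n, Y j = X j} := by
  have heq : {Y : HatBaire | ∀ j < n, Y j = X j} =
      ⋂ j ∈ Finset.range n, (fun Y : HatBaire => Y j) ⁻¹' {X j} := by
    ext Y
    simp [Set.mem_iInter]
  rw [heq]
  exact isOpen_biInter_finset fun j _ =>
    (isOpen_discrete _).preimage (continuous_apply j)

theorem isOpen_strip_get (k a : ℕ) : IsOpen {Z : HatBaire | (strip Z).get? k = some a} := by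
  rw [isOpen_iff_forall_mem_open]
  intro Z hZ
  obtain ⟨i, hi, hc⟩ := strip_get?_eq_some_iff.1 hZ
  refine ⟨{Y | ∀ j < i + 1, Y j = Z j}, ?_, isOpen_agree Z (i + 1), fun j _ => rfl⟩
  intro Y hY
  refine strip_get?_eq_some_iff.2 ⟨i, ?_, ?_⟩
  · rw [hY i (by omega)]
    exact hi
  · rw [cnt_congr fun j hj => hY j (by omega)]
    exact hc

theorem continuous_modulus {F : HatBaire → HatBaire} (hc : Continuous F) (X : HatBaire) {k a : ℕ}
    (h : (strip (F X)).get? k = some a) :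
    ∃ N, ∀ Y, (∀ j < N, Y j = X j) → (strip (F Y)).get? k = some a := by
  obtain ⟨I, u, hu, hsub⟩ :=
    isOpen_pi_iff.1 (IsOpen.preimage hc (isOpen_strip_get k a)) X h
  refine ⟨(I.sup id) + 1, fun Y hY => hsub ?_⟩
  intro j hj
  have hj' : j ∈ I := hj
  rw [hY j (by have := Finset.le_sup (f := id) hj'; simp at this; omega)]
  exact (hu j hj').2

theorem initSeg_length (X : Baire) (n : ℕ) : (initSeg X n).length = n := by simp [initSeg]

theorem initSeg_get?_lt {X : Baire} {n j : ℕ} (h : j < n) :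
    (initSeg X n)[j]? = some (X j) := by
  simp [initSeg, h]

theorem initSeg_get?_ge {X : Baire} {n j : ℕ} (h : n ≤ j) : (initSeg X n)[j]? = none := by
  simp [initSeg]
  omega

theorem ofList_append_get {σ ρ : List ℕ} {k a : ℕ} :
    (ofList (σ ++ ρ)).get? k = some a ↔
      (σ[k]? = some a ∨ (σ.length ≤ k ∧ ρ[k - σ.length]? = some a)) := by
  show (Stream'.Seq.ofList (σ ++ ρ)).get? k = some a ↔ _
  rw [Stream'.Seq.ofList_get?]
  rcases Nat.lt_or_ge k σ.length with h | h
  · rw [List.getElem?_append_left h]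
    constructor
    · exact Or.inl
    · rintro (h' | ⟨h1, -⟩)
      · exact h'
      · omega
  · rw [List.getElem?_append_right h]
    constructor
    · intro h'
      exact Or.inr ⟨h, h'⟩
    · rintro (h' | ⟨-, h'⟩)
      · rw [List.getElem?_eq_none_iff.2 h] at h'
        exact absurd h' (by simp)
      · exact h'

theorem collect_prefix (X : HatBaire) : ∀ {n m : ℕ}, n ≤ m → collect X n <+: collect X m := by
  intro n m h
  induction h with
  | refl => exact List.prefix_refl _
  | step _ ih => exact ih.trans ⟨(X _).toList, rfl⟩

/-- The approximation `G(X↾n-with-passes-deleted)`. -/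
def Gpart (G : Stream'.Seq ℕ → Stream'.Seq ℕ) (X : HatBaire) (n : ℕ) : Stream'.Seq ℕ :=
  G (ofList (collect X n))

/-- Number of values emitted by the continuous realization of `G` before stage `n`. -/
def cfun (G : Stream'.Seq ℕ → Stream'.Seq ℕ) (X : HatBaire) : ℕ → ℕ
  | 0 => 0
  | n + 1 => cfun G X n + if ((Gpart G X (n + 1)).get? (cfun G X n)).isSome then 1 else 0

/-- The continuous conciliatory realization of `G`. -/
def GhatF (G : Stream'.Seq ℕ → Stream'.Seq ℕ) (X : HatBaire) : HatBaire :=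
  fun n => (Gpart G X (n + 1)).get? (cfun G X n)

theorem cnt_GhatF (G : Stream'.Seq ℕ → Stream'.Seq ℕ) (X : HatBaire) :
    ∀ n, cnt (GhatF G X) n = cfun G X n
  | 0 => rfl
  | n + 1 => by
    simp only [cnt, cfun, cnt_GhatF G X n]
    rfl

theorem cfun_succ_le (G : Stream'.Seq ℕ → Stream'.Seq ℕ) (X : HatBaire) (n : ℕ) :
    cfun G X (n + 1) ≤ cfun G X n + 1 := by
  simp only [cfun]
  split <;> omega

theorem cfun_congr (G : Stream'.Seq ℕ → Stream'.Seq ℕ) {X Y : HatBaire} :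
    ∀ {n : ℕ}, (∀ j < n, Y j = X j) → cfun G Y n = cfun G X n := by
  intro n
  induction n with
  | zero => intro _; rfl
  | succ n ih =>
    intro h
    have h1 : Gpart G Y (n + 1) = Gpart G X (n + 1) := by
      rw [Gpart, Gpart, collect_congr h]
    simp only [cfun, ih fun j hj => h j (by omega), h1]

theorem continuous_GhatF (G : Stream'.Seq ℕ → Stream'.Seq ℕ) : Continuous (GhatF G) := by
  apply continuous_pi
  intro n
  apply IsLocallyConstant.continuous
  rw [IsLocallyConstant.iff_exists_open]
  intro X
  refine ⟨{Y | ∀ j < n + 1, Y j = X j}, isOpen_agree X (n + 1), fun j _ => rfl, ?_⟩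
  intro Y hY
  show (Gpart G Y (n + 1)).get? (cfun G Y n) = (Gpart G X (n + 1)).get? (cfun G X n)
  rw [Gpart, collect_congr hY, cfun_congr G fun j hj => hY j (by omega)]
  rfl

section StripChar

variable {G : Stream'.Seq ℕ → Stream'.Seq ℕ}
  (hmono : ∀ σ τ : List ℕ, σ <+: τ → SeqPrefix (G (ofList σ)) (G (ofList τ)))
  (hlim : ∀ X : Baire, ∀ k a,
    (G (ofBaire X)).get? k = some a ↔ ∃ n, (G (ofList (initSeg X n))).get? k = some a)

include hmono hlim in
theorem strip_char (X : HatBaire) :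
    (∀ n k a, (Gpart G X n).get? k = some a → (G (strip X)).get? k = some a) ∧
    (∀ k a, (G (strip X)).get? k = some a → ∃ n, (Gpart G X n).get? k = some a) := by
  by_cases h : ∀ m, ∃ j, m ≤ j ∧ (X j).isSome
  · -- infinitely many non-pass entries
    have hcnt : ∀ k, ∃ m, k ≤ cnt X m := by
      intro k
      induction k with
      | zero => exact ⟨0, Nat.zero_le _⟩
      | succ k ih =>
        obtain ⟨m, hm⟩ := ih
        obtain ⟨j, hj1, hj2⟩ := h m
        refine ⟨j + 1, ?_⟩
        have := cnt_some X hj2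
        have := cnt_mono X hj1
        omega
    have hstr : ∀ k, ∃ a, (strip X).get? k = some a := by
      intro k
      obtain ⟨m, hm⟩ := hcnt (k + 1)
      obtain ⟨i, _, hs, hc⟩ := exists_cnt_eq_of_lt (X := X) (k := k) (n := m) (by omega)
      obtain ⟨a, ha⟩ := Option.isSome_iff_exists.1 hs
      exact ⟨a, strip_get?_eq_some_iff.2 ⟨i, ha, hc⟩⟩
    set Yb : Baire := fun k => ((strip X).get? k).getD 0 with hYb
    have s3 : strip X = ofBaire Yb := by
      apply Stream'.Seq.ext
      intro k
      obtain ⟨a, ha⟩ := hstr k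
      rw [ha]
      show _ = some (Yb k)
      rw [hYb]
      simp [ha]
    have s4 : ∀ n, collect X n = initSeg Yb (cnt X n) := by
      intro n
      have hl1 : (collect X n).length = cnt X n := collect_length X n
      apply List.ext_getElem?
      intro k
      rcases Nat.lt_or_ge k (cnt X n) with hk | hk
      · obtain ⟨b, hb⟩ : ∃ b, (collect X n)[k]? = some b := by
          refine Option.ne_none_iff_exists'.1 fun hc => ?_
          rw [List.getElem?_eq_none_iff] at hc
          omega
        obtain ⟨i, hi1, hi2, hi3⟩ := collect_get?_eq_some_iff.1 hb
        have hsb : (strip X).get? k = some b := strip_get?_eq_some_iff.2 ⟨i, hi2, hi3⟩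
        rw [hb, initSeg_get?_lt hk, hYb]
        simp [hsb]
      · rw [List.getElem?_eq_none_iff.2 (by omega), initSeg_get?_ge hk]
    constructor
    · intro n k a hk
      have h1 : ∃ m, (G (ofList (initSeg Yb m))).get? k = some a := by
        refine ⟨cnt X n, ?_⟩
        rw [← s4 n]
        exact hk
      have := (hlim Yb k a).2 h1
      rw [← s3] at this
      exact this
    · intro k a hk
      rw [s3] at hk
      obtain ⟨n', hn'⟩ := (hlim Yb k a).1 hk
      obtain ⟨m, hm⟩ := hcnt n'
      obtain ⟨p, hp⟩ : ∃ p, cnt X p = n' := by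
        rcases Nat.eq_or_lt_of_le hm with h' | h'
        · exact ⟨m, h'.symm⟩
        · obtain ⟨i, -, -, hc⟩ := exists_cnt_eq_of_lt h'
          exact ⟨i, hc⟩
      refine ⟨p, ?_⟩
      rw [Gpart, s4 p, hp]
      exact hn'
  · -- finitely many non-pass entries
    push_neg at h
    obtain ⟨m, hm⟩ := h
    have hm' : ∀ j, m ≤ j → X j = none := fun j hj =>
      Option.not_isSome_iff_eq_none.1 (hm j hj)
    have s6 : strip X = ofList (collect X m) := by
      apply Stream'.Seq.ext
      intro k
      apply option_ext
      intro a
      rw [strip_get?_eq_some_iff]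
      show _ ↔ (Stream'.Seq.ofList _).get? k = some a
      rw [Stream'.Seq.ofList_get?, collect_get?_eq_some_iff]
      constructor
      · rintro ⟨i, hi, hc⟩
        refine ⟨i, ?_, hi, hc⟩
        by_contra hge
        rw [hm' i (by omega)] at hi
        exact absurd hi (by simp)
      · rintro ⟨i, -, hi, hc⟩
        exact ⟨i, hi, hc⟩
    constructor
    · intro n k a hk
      have h1 : (Gpart G X (max n m)).get? k = some a :=
        hmono _ _ (collect_prefix X (le_max_left n m)) k a hk
      rw [Gpart, collect_eq_of_none X (le_max_right n m)
        (fun j hj _ => hm' j hj)] at h1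
      rw [s6]
      exact h1
    · intro k a hk
      rw [s6] at hk
      exact ⟨m, hk⟩

include hmono hlim in
theorem strip_GhatF (X : HatBaire) : strip (GhatF G X) = G (strip X) := by
  obtain ⟨h1, h2⟩ := strip_char hmono hlim X
  apply Stream'.Seq.ext
  intro k
  apply option_ext
  intro a
  rw [strip_get?_eq_some_iff]
  constructor
  · rintro ⟨n, hn, hc⟩
    rw [cnt_GhatF] at hc
    refine h1 (n + 1) k a ?_
    rw [← hc]
    exact hn
  · intro hk
    obtain ⟨n₀, h0⟩ := h2 k a hk
    have hall : ∀ m, n₀ ≤ m + 1 → (Gpart G X (m + 1)).get? k = some a := fun m hm =>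
      hmono _ _ (collect_prefix X hm) k a h0
    have hex : ∃ n, k < cfun G X n := by
      by_contra hcon
      push_neg at hcon
      have hinc : ∀ m, n₀ ≤ m → cfun G X (m + 1) = cfun G X m + 1 := by
        intro m hm
        have hsome : ((Gpart G X (m + 1)).get? (cfun G X m)).isSome := by
          obtain ⟨b, hb⟩ := (Gpart G X (m + 1)).ge_stable (hcon m) (hall m (by omega))
          simp [hb]
        simp [cfun, hsome]
      have hlin : ∀ j, cfun G X (n₀ + j) = cfun G X n₀ + j := by
        intro j
        induction j with
        | zero => rfl
        | succ j ih =>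
          have : n₀ + (j + 1) = (n₀ + j) + 1 := rfl
          rw [this, hinc (n₀ + j) (by omega), ih]
          omega
      have := hcon (n₀ + (k + 1))
      rw [hlin (k + 1)] at this
      omega
    have h₁ : k < cfun G X (Nat.find hex) := Nat.find_spec hex
    have hne : Nat.find hex ≠ 0 := by
      intro h0'
      rw [h0'] at h₁
      simp [cfun] at h₁
    obtain ⟨n₂, hn₂⟩ : ∃ n₂, Nat.find hex = n₂ + 1 := ⟨Nat.find hex - 1, by omega⟩
    have h₂ : ¬ k < cfun G X n₂ := Nat.find_min hex (by omega)
    have hle := cfun_succ_le G X n₂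
    rw [hn₂] at h₁
    have hck : cfun G X n₂ = k := by omega
    have hsome : ((Gpart G X (n₂ + 1)).get? (cfun G X n₂)).isSome := by
      by_contra hns
      have : cfun G X (n₂ + 1) = cfun G X n₂ := by
        simp only [cfun]
        rw [if_neg hns]
        omega
      omega
    obtain ⟨b, hb⟩ := Option.isSome_iff_exists.1 hsome
    have hGb : (G (strip X)).get? k = some b := by
      refine h1 (n₂ + 1) k b ?_
      rw [← hck]
      exact hb
    have hba : b = a := by
      rw [hk] at hGb
      exact (Option.some_inj.1 hGb).symm
    refine ⟨n₂, ?_, ?_⟩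
    · show (Gpart G X (n₂ + 1)).get? (cfun G X n₂) = some a
      rw [hb, hba]
    · rw [cnt_GhatF]
      exact hck

end StripChar

/-- A function `G : ω^{≤ω} → ω^{≤ω}` can be represented as a continuous
conciliatory function (i.e. there is a continuous conciliatory `Ĝ : ω̂^ω → ω̂^ω` with
`Ĝ(X)^p = G(X^p)` for all `X`) iff: (i) `σ ⊆ τ` implies `G(σ) ⊆ G(τ)` for finite strings
`σ, τ`, and (ii) `G(X) = ⋃_n G(X↾n)` for every `X ∈ ω^ω`. -/
theorem continuous_conciliatory_representation (G : Stream'.Seq ℕ → Stream'.Seq ℕ) :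
    (∃ Ghat : HatBaire → HatBaire, Continuous Ghat ∧ ConciliatoryF Ghat ∧
        ∀ X, strip (Ghat X) = G (strip X)) ↔
      ((∀ σ τ : List ℕ, σ <+: τ → SeqPrefix (G (ofList σ)) (G (ofList τ))) ∧
       ∀ X : Baire, ∀ k a,
          (G (ofBaire X)).get? k = some a ↔ ∃ n, (G (ofList (initSeg X n))).get? k = some a) := by
  constructor
  · rintro ⟨Ghat, hc, -, hG⟩
    constructor
    · rintro σ τ ⟨ρ, rfl⟩ k a hk
      have h1 : (strip (Ghat (ofL σ))).get? k = some a := by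
        rw [hG, strip_ofL]
        exact hk
      obtain ⟨N, hN⟩ := continuous_modulus hc _ h1
      have h2 := hN (padA σ (max N σ.length) (ofL ρ)) fun j hj => by
        show (if j < max N σ.length then σ[j]? else _) = ofL σ j
        rw [if_pos (by omega), ofL]
      rw [hG] at h2
      have h3 : strip (padA σ (max N σ.length) (ofL ρ)) = ofList (σ ++ ρ) := by
        apply Stream'.Seq.ext
        intro n
        apply option_ext
        intro b
        rw [strip_padA_get (le_max_right _ _), strip_ofL, ofList_append_get]
        have hol : (ofList ρ).get? (n - σ.length) = ρ[n - σ.length]? :=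
          Stream'.Seq.ofList_get? ρ _
        rw [hol]
      rw [h3] at h2
      exact h2
    · intro X k a
      constructor
      · intro hk
        have h1 : (strip (Ghat (ofB X))).get? k = some a := by
          rw [hG, strip_ofB]
          exact hk
        obtain ⟨N, hN⟩ := continuous_modulus hc _ h1
        refine ⟨N, ?_⟩
        have h2 := hN (ofL (initSeg X N)) fun j hj => by
          show (initSeg X N)[j]? = some (X j)
          exact initSeg_get?_lt hj
        rw [hG, strip_ofL] at h2
        exact h2
      · rintro ⟨n, hn⟩
        have h1 : (strip (Ghat (ofL (initSeg X n)))).get? k = some a := by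
          rw [hG, strip_ofL]
          exact hn
        obtain ⟨N, hN⟩ := continuous_modulus hc _ h1
        have h2 := hN (padA (initSeg X n) (max N n) (ofB fun j => X (n + j))) fun j hj => by
          show (if j < max N n then (initSeg X n)[j]? else _) = ofL (initSeg X n) j
          rw [if_pos (by omega), ofL]
        rw [hG] at h2
        have h3 : strip (padA (initSeg X n) (max N n) (ofB fun j => X (n + j))) = ofBaire X := by
          apply Stream'.Seq.ext
          intro m
          apply option_ext
          intro b
          rw [strip_padA_get (by rw [initSeg_length]; exact le_max_right _ _), strip_ofB,
            initSeg_length]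
          have hOB : (ofBaire X).get? m = some (X m) := rfl
          have hOB2 : (ofBaire fun j => X (n + j)).get? (m - n) = some (X (n + (m - n))) := rfl
          rw [hOB, hOB2]
          constructor
          · rintro (h' | ⟨hmn, h'⟩)
            · rcases Nat.lt_or_ge m n with hm | hm
              · rw [initSeg_get?_lt hm] at h'
                exact h'
              · rw [initSeg_get?_ge hm] at h'
                exact absurd h' (by simp)
            · rw [show n + (m - n) = m by omega] at h'
              exact h'
          · intro h'
            rcases Nat.lt_or_ge m n with hm | hm
            · left
              rw [initSeg_get?_lt hm]
              exact h'
            · right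
              refine ⟨hm, ?_⟩
              rw [show n + (m - n) = m by omega]
              exact h'
        rw [h3] at h2
        exact h2
  · rintro ⟨hmono, hlim⟩
    refine ⟨GhatF G, continuous_GhatF G, ?_, ?_⟩
    · intro X Y hXY
      rw [strip_GhatF hmono hlim, strip_GhatF hmono hlim, hXY]
    · intro X
      exact strip_GhatF hmono hlim X


end WadgeStudy
end
end
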